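/- arXiv:2401.00925 — 5 statements merged into one kernel-verified Lean document; each statement's English description precedes it below -/
import Mathlib

section
/- Let (T,m) be a complete local ring, p a nonmaximal prime ideal of T, (R, R∩m) a p-subring of T, and set C = {p} ∪ Ass(T). If x ∈ T is such that for every q ∈ C the image x + q ∈ T/q is transcendental over R/(R ∩ q) ≅ R, then S = R[x]_{(R[x] ∩ m)} is a p-subring of T. Moreover, if R is finite then S is countably infinite, while if R is infinite then |S| = |R|. -/
open IsLocalRing

/-- The `q`-th Frobenius power `I^{[q]}` of an ideal: the ideal generated by `q`-th powers of
elements of `I`. -/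
def Ideal.frobPow {R : Type*} [CommRing R] (I : Ideal R) (q : ℕ) : Ideal R :=
  Ideal.span ((fun r => r ^ q) '' (I : Set R))

/-- Membership in the tight closure `I*` of an ideal `I` in a ring of characteristic `p`:
there is a `c` outside every minimal prime with `c * x^{p^e} ∈ I^{[p^e]}` for all `e ≫ 0`. -/
def Ideal.MemTightClosure {R : Type*} [CommRing R] (p : ℕ) (I : Ideal R) (x : R) : Prop :=
  ∃ c : R, (∀ P ∈ minimalPrimes R, c ∉ P) ∧
    ∃ E : ℕ, ∀ e : ℕ, E ≤ e → c * x ^ p ^ e ∈ I.frobPow (p ^ e)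

/-- A ring of characteristic `p` is weakly F-regular if every ideal is tightly closed. -/
def WeaklyFRegular (R : Type*) [CommRing R] (p : ℕ) : Prop :=
  ∀ (I : Ideal R) (x : R), I.MemTightClosure p x → x ∈ I

/-- A ring is F-regular if all of its localizations are weakly F-regular. -/
def FRegular (R : Type*) [CommRing R] (p : ℕ) : Prop :=
  ∀ S : Submonoid R, WeaklyFRegular (Localization S) p

/-- A ring is catenary if any two saturated chains of primes with the same endpoints have
the same length. -/
def IsCatenaryRing (R : Type*) [CommRing R] : Prop :=
  ∀ (n m : ℕ) (f : Fin (n + 1) → PrimeSpectrum R) (g : Fin (m + 1) → PrimeSpectrum R),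
    f 0 = g 0 → f (Fin.last n) = g (Fin.last m) →
    (∀ i : Fin n, f i.castSucc ⋖ f i.succ) → (∀ i : Fin m, g i.castSucc ⋖ g i.succ) →
    n = m

/-- `y` generates the socle of `T/I`, i.e. `(I : m) = I + (y)` and `y ∉ I`. -/
def IsSocleGenerator {T : Type*} [CommRing T] [IsLocalRing T] (I : Ideal T) (y : T) : Prop :=
  y ∉ I ∧ I.colon (maximalIdeal T) = I ⊔ Ideal.span {y}

/-- An approximately Gorenstein sequence: a descending chain of `m`-primary ideals with
Gorenstein quotients, cofinal with the powers of `m`. -/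
def IsApproxGorensteinSeq (T : Type*) [CommRing T] [IsLocalRing T] (I : ℕ → Ideal T) : Prop :=
  Antitone I ∧ (∀ s, (I s).radical = maximalIdeal T) ∧
  (∀ s, ∃ y, IsSocleGenerator (I s) y) ∧
  ∀ N : ℕ, ∃ S : ℕ, ∀ s : ℕ, S ≤ s → I s ≤ maximalIdeal T ^ N

/-- The set `M_{I,y} = ⋃_{e ≥ 1} ⋂_{f ≥ e} (I^{[p^f]} : y^{p^f})`. -/
def MIy {T : Type*} [CommRing T] (p : ℕ) (I : Ideal T) (y : T) : Set T :=
  {c : T | ∃ e : ℕ, 1 ≤ e ∧ ∀ f : ℕ, e ≤ f → c * y ^ p ^ f ∈ I.frobPow (p ^ f)}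

/-- `depth T ≥ n`: there is a regular sequence of length `n` in the maximal ideal. -/
def DepthGE (T : Type*) [CommRing T] [IsLocalRing T] (n : ℕ) : Prop :=
  ∃ rs : List T, rs.length = n ∧ (∀ x ∈ rs, x ∈ maximalIdeal T) ∧
    RingTheory.Sequence.IsRegular T rs

/-- A Noetherian local ring is Cohen–Macaulay iff there is a regular sequence in the maximal
ideal of length equal to the Krull dimension. -/
def IsCohenMacaulayLocal (T : Type*) [CommRing T] [IsLocalRing T] : Prop :=
  ∃ rs : List T, (∀ x ∈ rs, x ∈ maximalIdeal T) ∧ RingTheory.Sequence.IsRegular T rs ∧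
    (rs.length : WithBot (WithTop ℕ)) = ringKrullDim T

/-- A parameter ideal: generated by `dim T` elements, with radical the maximal ideal. -/
def IsParameterIdeal (T : Type*) [CommRing T] [IsLocalRing T] (I : Ideal T) : Prop :=
  ∃ (n : ℕ) (x : Fin n → T), I = Ideal.span (Set.range x) ∧ I.radical = maximalIdeal T ∧
    (n : WithBot (WithTop ℕ)) = ringKrullDim T

/-- A Noetherian local ring is Gorenstein iff it is Cohen–Macaulay and every parameter ideal
is irreducible (has one-dimensional socle). -/
def IsGorensteinLocal (T : Type*) [CommRing T] [IsLocalRing T] : Prop :=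
  IsCohenMacaulayLocal T ∧ ∀ I : Ideal T, IsParameterIdeal T I → ∃ y, IsSocleGenerator I y

/-- A `p`-subring of a local ring `T`: a quasi-local subring `(R, R ∩ m)` which is small,
misses `p`, and misses every associated prime of `T`. -/
def IsPSubring (T : Type*) [CommRing T] [IsLocalRing T] (P : Ideal T) (R : Subring T) : Prop :=
  IsLocalRing R ∧ (Ideal.comap R.subtype (maximalIdeal T)).IsMaximal ∧
  (Cardinal.mk R ≤ max Cardinal.aleph0 (Cardinal.mk (ResidueField T)) ∧
    (Cardinal.mk R = max Cardinal.aleph0 (Cardinal.mk (ResidueField T)) →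
      Cardinal.mk (ResidueField T) ≤ Cardinal.aleph0)) ∧
  Ideal.comap R.subtype P = ⊥ ∧
  ∀ Q ∈ associatedPrimes T T, Ideal.comap R.subtype Q = ⊥

/-- An N-subring of a local ring `T`: a quasi-local UFD `(R, R ∩ m)` inside `T` which is small,
misses every associated prime of `T`, and such that `R ∩ J` has height at most one for every
`J ∈ Ass(T/tT)`, `t` a nonzerodivisor. -/
def IsNSubring (T : Type*) [CommRing T] [IsLocalRing T] (R : Subring T) : Prop :=
  IsLocalRing R ∧ (Ideal.comap R.subtype (maximalIdeal T)).IsMaximal ∧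
  (∃ _ : IsDomain R, UniqueFactorizationMonoid R) ∧
  (Cardinal.mk R ≤ max Cardinal.aleph0 (Cardinal.mk (ResidueField T)) ∧
    (Cardinal.mk R = max Cardinal.aleph0 (Cardinal.mk (ResidueField T)) →
      Cardinal.mk (ResidueField T) ≤ Cardinal.aleph0)) ∧
  (∀ Q ∈ associatedPrimes T T, Ideal.comap R.subtype Q = ⊥) ∧
  ∀ t ∈ nonZeroDivisors T, ∀ J ∈ associatedPrimes T (T ⧸ Ideal.span {t}),
    ∀ q0 q1 : Ideal R, q0.IsPrime → q1.IsPrime →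
      ¬(q0 < q1 ∧ q1 < Ideal.comap R.subtype J)

open Polynomial

section Helpers
variable {T : Type*} [CommRing T] (R : Subring T) (x : T)

variable {T : Type*} [CommRing T] (R : Subring T) (x : T)

lemma mem_closure_union_singleton {a : T} :
    a ∈ Subring.closure ((R : Set T) ∪ {x}) ↔ ∃ f : Polynomial R, aeval x f = a := by
  have hrange : Set.range (algebraMap R T) = (R : Set T) := Subtype.range_coe
  rw [← hrange, ← Algebra.mem_adjoin_iff, Algebra.adjoin_singleton_eq_range_aeval,
    AlgHom.mem_range]

lemma closure_mem_eq_zero {Q : Ideal T}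
    (hx : Transcendental R ((Ideal.Quotient.mk Q) x))
    {a : T} (ha : a ∈ Subring.closure ((R : Set T) ∪ {x})) (haQ : a ∈ Q) : a = 0 := by
  obtain ⟨f, rfl⟩ := (mem_closure_union_singleton R x).mp ha
  have h0 : aeval ((Ideal.Quotient.mk Q) x) f = 0 := by
    have := Polynomial.aeval_algHom_apply (Ideal.Quotient.mkₐ R Q) x f
    simp only [Ideal.Quotient.mkₐ_eq_mk] at this
    rw [this, ← (Ideal.Quotient.eq_zero_iff_mem).mpr haQ]
  have := (transcendental_iff.mp hx) f h0
  simp [this]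
end Helpers

/-- Adjoining a suitably transcendental element to a `p`-subring and
localizing yields a `p`-subring. -/
theorem pSubring_adjoin_transcendental
    (T : Type*) [CommRing T] [IsLocalRing T] [IsNoetherianRing T]
    [IsAdicComplete (maximalIdeal T) T]
    (P : Ideal T) (hP : P.IsPrime) (hPm : P ≠ maximalIdeal T)
    (R : Subring T) (hR : IsPSubring T P R)
    (x : T)
    (hx : ∀ Q ∈ insert P (associatedPrimes T T),
      Transcendental R ((Ideal.Quotient.mk Q) x)) :
    ∃ S : Subring T,
      (S : Set T) = {t : T | ∃ a ∈ Subring.closure ((R : Set T) ∪ {x}),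
        ∃ b ∈ Subring.closure ((R : Set T) ∪ {x}), b ∉ maximalIdeal T ∧ b * t = a} ∧
      IsPSubring T P S ∧
      (Finite R → Countable S ∧ Infinite S) ∧
      (Infinite R → Cardinal.mk S = Cardinal.mk R) := by
  classical
  set A := Subring.closure ((R : Set T) ∪ {x}) with hA
  have hone1 : (1 : T) ∉ maximalIdeal T :=
    (Ideal.ne_top_iff_one _).mp (maximalIdeal.isMaximal T).ne_top
  have hunit : ∀ b : T, b ∉ maximalIdeal T → IsUnit b := by
    intro b hb
    by_contra h
    exact hb ((IsLocalRing.mem_maximalIdeal b).mpr h)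
  have hmulm : ∀ b1 b2 : T, b1 ∉ maximalIdeal T → b2 ∉ maximalIdeal T →
      b1 * b2 ∉ maximalIdeal T := by
    intro b1 b2 h1 h2 hm
    rcases ((maximalIdeal.isMaximal T).isPrime.mem_or_mem hm) with h | h
    exacts [h1 h, h2 h]
  let S : Subring T :=
    { carrier := {t : T | ∃ a ∈ A, ∃ b ∈ A, b ∉ maximalIdeal T ∧ b * t = a}
      zero_mem' := ⟨0, zero_mem A, 1, one_mem A, hone1, by ring⟩
      one_mem' := ⟨1, one_mem A, 1, one_mem A, hone1, by ring⟩
      add_mem' := by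
        rintro t1 t2 ⟨a1, ha1, b1, hb1, hb1m, he1⟩ ⟨a2, ha2, b2, hb2, hb2m, he2⟩
        exact ⟨b2 * a1 + b1 * a2, add_mem (mul_mem hb2 ha1) (mul_mem hb1 ha2),
          b1 * b2, mul_mem hb1 hb2, hmulm _ _ hb1m hb2m, by rw [← he1, ← he2]; ring⟩
      mul_mem' := by
        rintro t1 t2 ⟨a1, ha1, b1, hb1, hb1m, he1⟩ ⟨a2, ha2, b2, hb2, hb2m, he2⟩
        exact ⟨a1 * a2, mul_mem ha1 ha2,
          b1 * b2, mul_mem hb1 hb2, hmulm _ _ hb1m hb2m, by rw [← he1, ← he2]; ring⟩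
      neg_mem' := by
        rintro t ⟨a, ha, b, hb, hbm, he⟩
        exact ⟨-a, neg_mem ha, b, hb, hbm, by rw [← he]; ring⟩ }
  -- every element of S outside m is a unit of S
  have hU : ∀ t : S, (t : T) ∉ maximalIdeal T → IsUnit t := by
    intro t htm
    obtain ⟨a, ha, b, hb, hbm, he⟩ := t.2
    have ham : a ∉ maximalIdeal T := by
      rw [← he]
      intro hmem
      rcases ((maximalIdeal.isMaximal T).isPrime.mem_or_mem hmem) with h | h
      exacts [hbm h, htm h]
    obtain ⟨ua, hua⟩ := hunit a ham
    have h1 : a * ((ua⁻¹ : Tˣ) : T) = 1 := by rw [← hua]; exact ua.mul_inv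
    have h2 : ((ua⁻¹ : Tˣ) : T) * a = 1 := by rw [← hua]; exact ua.inv_mul
    have humem : ((ua⁻¹ : Tˣ) : T) * b ∈ S :=
      ⟨b, hb, a, ha, ham, by rw [← mul_assoc, h1, one_mul]⟩
    refine IsUnit.of_mul_eq_one (a := t) ⟨_, humem⟩ ?_
    apply Subtype.ext
    show (t : T) * (((ua⁻¹ : Tˣ) : T) * b) = 1
    calc (t : T) * (((ua⁻¹ : Tˣ) : T) * b) = ((ua⁻¹ : Tˣ) : T) * (b * t) := by ring
    _ = 1 := by rw [he, h2]
  haveI : Nontrivial S := ⟨⟨0, 1, fun h => zero_ne_one (congrArg Subtype.val h)⟩⟩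
  haveI hSloc : IsLocalRing S := by
    apply IsLocalRing.of_isUnit_or_isUnit_one_sub_self
    intro t
    by_cases h : (t : T) ∈ maximalIdeal T
    · right
      refine hU _ (fun hmem => hone1 ?_)
      have hc : ((1 - t : S) : T) = 1 - (t : T) := by push_cast; ring
      rw [hc] at hmem
      have h2 := Ideal.add_mem _ h hmem
      simpa using h2
    · exact Or.inl (hU t h)
  -- comap of the maximal ideal is the maximal ideal of S
  have hImax : Ideal.comap S.subtype (maximalIdeal T) = maximalIdeal S := by
    ext t
    rw [Ideal.mem_comap]
    constructor
    · intro h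
      rw [IsLocalRing.mem_maximalIdeal, mem_nonunits_iff]
      intro hu
      obtain ⟨v, hv⟩ := hu.exists_right_inv
      apply hone1
      have hv' : (t : T) * ((v : S) : T) = 1 := by exact_mod_cast congrArg Subtype.val hv
      rw [← hv']
      exact Ideal.mul_mem_right _ _ h
    · intro h
      by_contra hm
      rw [IsLocalRing.mem_maximalIdeal, mem_nonunits_iff] at h
      exact h (hU t hm)
  -- intersections with transcendence primes are trivial
  have hQtriv : ∀ Q : Ideal T, Transcendental R ((Ideal.Quotient.mk Q) x) →
      Ideal.comap S.subtype Q = ⊥ := by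
    intro Q hQ
    ext t
    rw [Ideal.mem_comap, Ideal.mem_bot]
    constructor
    · intro ht
      obtain ⟨a, ha, b, hb, hbm, he⟩ := t.2
      have haQ : a ∈ Q := he ▸ Ideal.mul_mem_left _ _ ht
      have ha0 : a = 0 := closure_mem_eq_zero R x hQ ha haQ
      have hb0 : b * (t : T) = 0 := he.trans ha0
      exact Subtype.ext ((hunit b hbm).mul_right_eq_zero.mp hb0)
    · intro h; rw [h]; exact Submodule.zero_mem _
  have hxP := hx P (Set.mem_insert _ _)
  -- cardinality bounds
  have hAcard : Cardinal.mk A ≤ max (Cardinal.mk R) Cardinal.aleph0 := by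
    have hsurj : Function.Surjective
        (fun f : Polynomial R =>
          (⟨aeval x f, (mem_closure_union_singleton R x).mpr ⟨f, rfl⟩⟩ : A)) := by
      rintro ⟨a, ha⟩
      obtain ⟨f, hf⟩ := (mem_closure_union_singleton R x).mp ha
      exact ⟨f, Subtype.ext hf⟩
    exact (Cardinal.mk_le_of_surjective hsurj).trans Polynomial.cardinalMk_le_max
  have hScard : Cardinal.mk S ≤ max (Cardinal.mk R) Cardinal.aleph0 := by
    choose a ha b hb hbm he using fun t : S => t.2
    have hinj : Function.Injective
        (fun t : S => ((⟨a t, ha t⟩ : A), (⟨b t, hb t⟩ : A))) := by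
      intro t1 t2 h
      have hA1 : a t1 = a t2 := congrArg (fun p : A × A => (p.1 : T)) h
      have hB1 : b t1 = b t2 := congrArg (fun p : A × A => (p.2 : T)) h
      have h1 : b t1 * (t1 : T) = b t1 * (t2 : T) := by
        rw [he t1, hA1, ← he t2, hB1]
      exact Subtype.ext ((hunit _ (hbm t1)).mul_left_cancel h1)
    have h1 : Cardinal.mk S ≤ Cardinal.mk (A × A) := Cardinal.mk_le_of_injective hinj
    have h2 : Cardinal.mk (A × A) = Cardinal.mk A * Cardinal.mk A := by
      simp [Cardinal.mk_prod]
    have h3 : max (Cardinal.mk R) Cardinal.aleph0 * max (Cardinal.mk R) Cardinal.aleph0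
        = max (Cardinal.mk R) Cardinal.aleph0 := Cardinal.mul_eq_self (le_max_right _ _)
    calc Cardinal.mk S ≤ Cardinal.mk A * Cardinal.mk A := h2 ▸ h1
      _ ≤ max (Cardinal.mk R) Cardinal.aleph0 * max (Cardinal.mk R) Cardinal.aleph0 :=
          mul_le_mul' hAcard hAcard
      _ = _ := h3
  -- R embeds in S
  have hRmem : ∀ r : R, (r : T) ∈ S := fun r =>
    ⟨r, Subring.subset_closure (Or.inl r.2), 1, one_mem A, hone1, one_mul _⟩
  have hRS : Cardinal.mk R ≤ Cardinal.mk S := by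
    refine Cardinal.mk_le_of_injective (f := fun r : R => (⟨(r : T), hRmem r⟩ : S)) ?_
    intro r1 r2 h
    have h' : (r1 : T) = (r2 : T) := congrArg (fun s : S => (s : T)) h
    exact Subtype.ext h'
  have hxS : x ∈ S := ⟨x, Subring.subset_closure (Or.inr rfl), 1, one_mem A, hone1, one_mul _⟩
  -- S is infinite
  haveI := hR.1
  haveI : Nontrivial R := inferInstance
  have hpow : Function.Injective (fun n : ℕ => x ^ n) := by
    intro n m hnm
    by_contra hne
    simp only at hnm
    have h0 : aeval ((Ideal.Quotient.mk P) x) ((X : Polynomial R) ^ n - X ^ m) = 0 := by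
      rw [map_sub, map_pow, map_pow, aeval_X, ← map_pow, ← map_pow, hnm, sub_self]
    have hf := (transcendental_iff.mp hxP) _ h0
    have hcoeff : ((X : Polynomial R) ^ n - X ^ m).coeff n = 0 := by
      rw [hf, Polynomial.coeff_zero]
    rw [Polynomial.coeff_sub, Polynomial.coeff_X_pow, Polynomial.coeff_X_pow,
      if_pos rfl, if_neg hne, sub_zero] at hcoeff
    exact one_ne_zero hcoeff
  haveI hSinf : Infinite S := by
    refine Infinite.of_injective (fun n : ℕ => (⟨x ^ n, pow_mem hxS n⟩ : S)) ?_
    intro n m h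
    exact hpow (congrArg Subtype.val h)
  refine ⟨S, rfl, ⟨hSloc, hImax ▸ inferInstance, ⟨?_, ?_⟩, hQtriv P hxP,
      fun Q hQ => hQtriv Q (hx Q (Set.mem_insert_of_mem _ hQ))⟩, ?_, ?_⟩
  · -- cardinality bound
    refine hScard.trans (max_le ?_ (le_max_left _ _))
    exact hR.2.2.1.1.trans (by rw [max_comm])
  · -- equality case
    intro hSeq
    by_cases hk : Cardinal.mk (ResidueField T) ≤ Cardinal.aleph0
    · exact hk
    · have hM : Cardinal.aleph0 < Cardinal.mk (ResidueField T) := lt_of_not_ge hk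
      have h1 : max Cardinal.aleph0 (Cardinal.mk (ResidueField T))
          = Cardinal.mk (ResidueField T) := max_eq_right hM.le
      have h2 : Cardinal.mk (ResidueField T) ≤ max (Cardinal.mk R) Cardinal.aleph0 := by
        rw [h1] at hSeq; exact hSeq ▸ hScard
      rcases le_total (Cardinal.mk R) Cardinal.aleph0 with hc | hc
      · exact absurd (h2.trans (max_le hc le_rfl)) (not_le.mpr hM)
      · have h3 : Cardinal.mk (ResidueField T) ≤ Cardinal.mk R := by
          rwa [max_eq_left hc] at h2
        have h4 : Cardinal.mk R = max Cardinal.aleph0 (Cardinal.mk (ResidueField T)) :=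
          le_antisymm hR.2.2.1.1 (by rw [h1]; exact h3)
        exact hR.2.2.1.2 h4
  · -- finite case
    intro hfin
    haveI := hfin
    have hc : Cardinal.mk S ≤ Cardinal.aleph0 := by
      refine hScard.trans (max_le ?_ le_rfl)
      exact (Cardinal.lt_aleph0_of_finite R).le
    exact ⟨Cardinal.mk_le_aleph0_iff.mp hc, hSinf⟩
  · -- infinite case
    intro hinf
    haveI := hinf
    refine le_antisymm (hScard.trans ?_) hRS
    rw [max_eq_left (Cardinal.aleph0_le_mk R)]
end

section
/- Let (T,m) be a complete local ring and let p be a nonmaximal prime ideal of T. Let y ∈ m \ p be a regular element of T, and let (R, R∩m) be a p-subring of T. Then there exists a p-subring (S, S∩m) of T such that R ⊆ S ⊆ T and yt ∈ S for some unit t of T. Moreover, if R is finite then S is countably infinite, while if R is infinite then |S| = |R|. -/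
open IsLocalRing

section PSubAuxSection

open Cardinal Polynomial

namespace PSubAux

variable {T : Type*} [CommRing T]

lemma smulTop (I : Ideal T) : (I • ⊤ : Submodule T T) = I := by
  rw [smul_eq_mul, Ideal.mul_top]

lemma continuum_le_mk_quotient [IsLocalRing T] [IsNoetherianRing T]
    [IsAdicComplete (maximalIdeal T) T]
    (q : Ideal T) (hq : q.IsPrime) {x : T} (hx : x ∈ maximalIdeal T) (hxq : x ∉ q) :
    Cardinal.continuum ≤ Cardinal.mk (T ⧸ q) := by
  classical
  set I := maximalIdeal T with hIdef
  set F : Set ℕ → ℕ → T := fun s n => ∑ i ∈ Finset.range n, if i ∈ s then x ^ (i + 1) else 0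
    with hF
  have hdiff : ∀ (s : Set ℕ) {a b : ℕ}, a ≤ b → F s b - F s a ∈ I ^ a := by
    intro s a b hab
    rw [hF, ← Finset.sum_Ico_eq_sub _ hab]
    refine Ideal.sum_mem _ fun i hi => ?_
    rw [Finset.mem_Ico] at hi
    split
    · exact Ideal.pow_le_pow_right (le_trans hi.1 (Nat.le_succ i)) (Ideal.pow_mem_pow hx (i + 1))
    · exact zero_mem _
  have hcauchy : ∀ s : Set ℕ, ∃ L, ∀ n, F s n ≡ L [SMOD (I ^ n • ⊤ : Submodule T T)] := by
    intro s
    refine IsPrecomplete.prec (IsAdicComplete.toIsPrecomplete) ?_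
    intro a b hab
    rw [SModEq.sub_mem, smulTop]
    have := (I ^ a).neg_mem (hdiff s hab)
    simpa using this
  choose L hL using hcauchy
  have hLF : ∀ s n, L s - F s n ∈ I ^ n := by
    intro s n
    have := hL s n
    rw [SModEq.sub_mem, smulTop] at this
    simpa using (I ^ n).neg_mem this
  have hinj : Function.Injective (fun s : Set ℕ => Ideal.Quotient.mk q (L s)) := by
    intro s s' hss
    simp only at hss
    by_contra hne
    have hex : ∃ k, ¬(k ∈ s ↔ k ∈ s') := by
      by_contra h
      simp only [not_exists, not_not] at h
      exact hne (Set.ext fun k => h k)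
    set k := Nat.find hex with hk
    have hkspec : ¬(k ∈ s ↔ k ∈ s') := Nat.find_spec hex
    have hmin : ∀ i, i < k → ((i ∈ s) ↔ (i ∈ s')) := fun i hi => not_not.mp (Nat.find_min hex hi)
    set ε : T := if k ∈ s then 1 else -1 with hε
    -- factorization of partial-sum differences
    have key : ∀ n, k + 1 ≤ n → ∃ c ∈ I, F s n - F s' n = x ^ (k + 1) * (ε + c) := by
      intro n hn
      have hkn : k < n := hn
      set d : ℕ → T := fun i =>
        (if i ∈ s then x ^ (i + 1) else 0) - (if i ∈ s' then x ^ (i + 1) else 0) with hd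
      have h0 : F s n - F s' n = ∑ i ∈ Finset.range n, d i := by
        rw [hF]; exact (Finset.sum_sub_distrib _ _).symm
      have hsplit : ∑ i ∈ Finset.range n, d i = ∑ i ∈ Finset.Ico k n, d i := by
        rw [Finset.range_eq_Ico, ← Finset.sum_Ico_consecutive d (Nat.zero_le k) (le_of_lt hkn)]
        have : ∑ i ∈ Finset.Ico 0 k, d i = 0 := by
          refine Finset.sum_eq_zero fun i hi => ?_
          rw [Finset.mem_Ico] at hi
          have := hmin i hi.2
          rw [hd]
          by_cases hmem : i ∈ s
          · simp [hmem, this.mp hmem]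
          · have h2 : i ∉ s' := fun h => hmem (this.mpr h)
            simp [hmem, h2]
        rw [this, zero_add]
      have hbot : ∑ i ∈ Finset.Ico k n, d i = d k + ∑ i ∈ Finset.Ico (k + 1) n, d i :=
        Finset.sum_eq_sum_Ico_succ_bot hkn d
      set c : T := ∑ i ∈ Finset.Ico (k + 1) n,
        ((if i ∈ s then x ^ (i - k) else 0) - (if i ∈ s' then x ^ (i - k) else 0)) with hc
      have hcI : c ∈ I := by
        refine Ideal.sum_mem _ fun i hi => ?_
        rw [Finset.mem_Ico] at hi
        have hpow : x ^ (i - k) ∈ I := by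
          have : x ^ (i - k) = x ^ (i - k - 1) * x := by
            rw [← pow_succ]
            congr 1
            omega
          rw [this]
          exact Ideal.mul_mem_left _ _ hx
        refine sub_mem ?_ ?_ <;> (split <;> simp [hpow, zero_mem])
      have htail : ∑ i ∈ Finset.Ico (k + 1) n, d i = x ^ (k + 1) * c := by
        rw [hc, Finset.mul_sum]
        refine Finset.sum_congr rfl fun i hi => ?_
        rw [Finset.mem_Ico] at hi
        have hpow : x ^ (k + 1) * x ^ (i - k) = x ^ (i + 1) := by
          rw [← pow_add]
          congr 1
          omega
        rw [hd]
        by_cases h1 : i ∈ s <;> by_cases h2 : i ∈ s' <;> simp [h1, h2, mul_sub, hpow]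
      have hdk : d k = ε * x ^ (k + 1) := by
        rw [hd, hε]
        by_cases hmem : k ∈ s
        · have : k ∉ s' := fun h => hkspec ⟨fun _ => h, fun _ => hmem⟩
          simp [hmem, this]
        · have : k ∈ s' := by
            by_contra h
            exact hkspec ⟨fun h' => absurd h' hmem, fun h' => absurd h' h⟩
          simp [hmem, this]
      exact ⟨c, hcI, by rw [h0, hsplit, hbot, htail, hdk]; ring⟩
    -- pass to the quotient domain
    set π := Ideal.Quotient.mk q with hπ
    set J : Ideal (T ⧸ q) := I.map π with hJ
    have hd0 : π (L s - L s') = 0 := by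
      rw [map_sub, sub_eq_zero]
      exact hss
    have hmem : ∀ n, k + 1 ≤ n → (π x) ^ (k + 1) ∈ J ^ n := by
      intro n hn
      obtain ⟨c, hcI, hfac⟩ := key n hn
      have h1 : (L s - F s n) - (L s' - F s' n) ∈ I ^ n := sub_mem (hLF s n) (hLF s' n)
      have h2 : x ^ (k + 1) * (ε + c) - (L s - L s') ∈ I ^ n := by
        have heq : x ^ (k + 1) * (ε + c) - (L s - L s') =
            -((L s - F s n) - (L s' - F s' n)) := by
          rw [← hfac]; ring
        rw [heq]
        exact neg_mem h1
      have h3 : π (x ^ (k + 1) * (ε + c)) ∈ J ^ n := by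
        have : π (x ^ (k + 1) * (ε + c)) = π (x ^ (k + 1) * (ε + c) - (L s - L s')) := by
          rw [map_sub, hd0, sub_zero]
        rw [this, hJ, ← Ideal.map_pow]
        exact Ideal.mem_map_of_mem π h2
      have hu : IsUnit (ε + c) := by
        by_contra h
        have hmemI : ε + c ∈ I := by
          rw [hIdef, mem_maximalIdeal]
          exact h
        have hεI : ε ∈ I := by
          have : ε = (ε + c) - c := by ring
          rw [this]
          exact sub_mem hmemI hcI
        have hεu : IsUnit ε := by
          rw [hε]
          split
          · exact isUnit_one
          · exact isUnit_one.neg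
        exact (maximalIdeal.isMaximal T).ne_top (Ideal.eq_top_of_isUnit_mem _ hεI hεu)
      have hu' : IsUnit (π (ε + c)) := hu.map π
      have := Ideal.mul_mem_right (↑hu'.unit⁻¹) _ h3
      rwa [map_mul, map_pow, mul_assoc, IsUnit.mul_val_inv, mul_one] at this
    have hJtop : J ≠ ⊤ := by
      intro h
      have h1 : (1 : T ⧸ q) ∈ J := h ▸ Submodule.mem_top
      rw [hJ, Ideal.mem_map_iff_of_surjective π Ideal.Quotient.mk_surjective] at h1
      obtain ⟨a, haI, ha1⟩ := h1
      have : a - 1 ∈ q := by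
        rw [← Ideal.Quotient.eq]
        simpa using ha1
      have h1m : (1 : T) ∈ I := by
        have := sub_mem haI ((le_maximalIdeal hq.ne_top) this)
        simpa using this
      exact (maximalIdeal.isMaximal T).ne_top ((Ideal.eq_top_iff_one I).mpr h1m)
    haveI : IsDomain (T ⧸ q) := Ideal.Quotient.isDomain q
    have hiInf : (π x) ^ (k + 1) ∈ ⨅ n : ℕ, J ^ n := by
      rw [Ideal.mem_iInf]
      intro n
      exact Ideal.pow_le_pow_right (le_max_left n (k + 1))
        (hmem (max n (k + 1)) (le_max_right n (k + 1)))
    rw [Ideal.iInf_pow_eq_bot_of_isDomain J hJtop, Ideal.mem_bot] at hiInf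
    have : π x = 0 := by
      exact pow_eq_zero_iff (Nat.succ_ne_zero k) |>.mp hiInf
    rw [Ideal.Quotient.eq_zero_iff_mem] at this
    exact hxq this
  have hinj2 : Function.Injective
      (fun s : ULift.{u_1} (Set ℕ) => Ideal.Quotient.mk q (L s.down)) := by
    intro a b h
    exact congrArg ULift.up (hinj h)
  calc Cardinal.continuum = Cardinal.mk (ULift.{u_1} (Set ℕ)) := by
        rw [Cardinal.mk_uLift, Cardinal.mk_set, Cardinal.mk_nat, Cardinal.two_power_aleph0,
          Cardinal.lift_continuum]
      _ ≤ Cardinal.mk (T ⧸ q) := Cardinal.mk_le_of_injective hinj2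

end PSubAux


open Cardinal

namespace PSubAux2

variable {T : Type u} [CommRing T]

lemma avoid (n : ℕ) : ∀ (C : Finset (Ideal T)), C.card = n → (∀ q ∈ C, q.IsPrime) →
    ∀ (V : (q : Ideal T) → Set (T ⧸ q)),
      (∀ q ∈ C, Cardinal.mk (V q) < Cardinal.mk (T ⧸ q)) →
    ∀ (G : Ideal T), (∀ q ∈ C, ∃ z ∈ G, z ∉ q) →
    ∀ g : T, ∃ a : T, a - g ∈ G ∧ ∀ q ∈ C, (Ideal.Quotient.mk q a) ∉ V q := by
  classical
  induction n with
  | zero =>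
    intro C hC _ V _ G _ g
    refine ⟨g, by simp, fun q hq => absurd hq ?_⟩
    rw [Finset.card_eq_zero] at hC
    simp [hC]
  | succ n IH =>
    intro C hC hprime V hV G hG g
    have hne : (C : Set (Ideal T)).Nonempty := by
      rw [Finset.coe_nonempty, ← Finset.card_pos, hC]
      omega
    obtain ⟨q0, hq0C, hq0max⟩ :=
      Set.Finite.exists_maximalFor id (C : Set (Ideal T)) (Finset.finite_toSet C) hne
    rw [Finset.mem_coe] at hq0C
    haveI hq0p : q0.IsPrime := hprime q0 hq0C
    obtain ⟨z0, hz0G, hz0q⟩ := hG q0 hq0C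
    set π0 := Ideal.Quotient.mk q0 with hπ0
    -- find a translate avoiding V q0
    have hstep : ∃ u : T, u ∈ G ∧ π0 (g + u) ∉ V q0 := by
      by_contra h
      push_neg at h
      have hinj : Function.Injective (fun b : T ⧸ q0 => π0 g + π0 z0 * b) := by
        intro b b' hbb
        simp only [add_right_inj] at hbb
        haveI : IsDomain (T ⧸ q0) := Ideal.Quotient.isDomain q0
        exact mul_left_cancel₀ (by rwa [Ne, Ideal.Quotient.eq_zero_iff_mem]) hbb
      have hinj2 : Function.Injective (fun b : T ⧸ q0 =>
          (⟨π0 g + π0 z0 * b, by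
            obtain ⟨c, hc⟩ := Ideal.Quotient.mk_surjective (I := q0) b
            have : π0 g + π0 z0 * b = π0 (g + z0 * c) := by rw [map_add, map_mul, hc]
            rw [this]
            exact h (z0 * c) (Ideal.mul_mem_right c G hz0G)⟩ : V q0)) := by
        intro b b' hbb
        exact hinj (congrArg Subtype.val hbb)
      exact absurd (Cardinal.mk_le_of_injective hinj2) (not_le.mpr (hV q0 hq0C))
    obtain ⟨u, huG, hu⟩ := hstep
    -- peel off q0
    have hGmax : ∀ q ∈ C.erase q0, ∃ z ∈ G ⊓ q0, z ∉ q := by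
      intro q hq
      rw [Finset.mem_erase] at hq
      obtain ⟨hqne, hqC⟩ := hq
      obtain ⟨z, hzG, hzq⟩ := hG q hqC
      have hnle : ¬ q0 ≤ q := by
        intro hle
        exact hqne (le_antisymm (hq0max (Finset.mem_coe.mpr hqC) hle) hle)
      obtain ⟨w, hwq0, hwq⟩ := SetLike.not_le_iff_exists.mp hnle
      refine ⟨z * w, ⟨Ideal.mul_mem_right w G hzG, Ideal.mul_mem_left q0 z hwq0⟩, ?_⟩
      intro hmem
      rcases (hprime q hqC).mem_or_mem hmem with h | h
      · exact hzq h
      · exact hwq h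
    obtain ⟨a, haG, haV⟩ := IH (C.erase q0) (by rw [Finset.card_erase_of_mem hq0C, hC]; rfl)
      (fun q hq => hprime q (Finset.mem_of_mem_erase hq)) V
      (fun q hq => hV q (Finset.mem_of_mem_erase hq)) (G ⊓ q0) hGmax (g + u)
    refine ⟨a, ?_, ?_⟩
    · have : a - g = (a - (g + u)) + u := by ring
      rw [this]
      exact add_mem haG.1 huG
    · intro q hqC
      by_cases hqq0 : q = q0
      · subst hqq0
        have : π0 a = π0 (g + u) := by
          rw [Ideal.Quotient.eq]
          exact haG.2
        rwa [this]
      · exact haV q (Finset.mem_erase.mpr ⟨hqq0, hqC⟩)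

end PSubAux2


open IsLocalRing Cardinal Polynomial

namespace PSubAux3

variable {T : Type u} [CommRing T] [IsLocalRing T]

/-- The localization of a subring `R1` at the contraction of the maximal ideal, inside `T`. -/
def locSubring (R1 : Subring T) : Subring T where
  carrier := {x | ∃ b, b ∈ R1 ∧ b ∉ maximalIdeal T ∧ b * x ∈ R1}
  one_mem' := ⟨1, one_mem _, fun h => (maximalIdeal.isMaximal T).ne_top
    ((Ideal.eq_top_iff_one _).mpr h), by simpa using one_mem R1⟩
  zero_mem' := ⟨1, one_mem _, fun h => (maximalIdeal.isMaximal T).ne_top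
    ((Ideal.eq_top_iff_one _).mpr h), by simpa using zero_mem R1⟩
  mul_mem' := by
    rintro x y ⟨b1, hb1, hb1m, hbx1⟩ ⟨b2, hb2, hb2m, hbx2⟩
    refine ⟨b1 * b2, mul_mem hb1 hb2, ?_, ?_⟩
    · intro h
      rcases ((maximalIdeal.isMaximal T).isPrime.mem_or_mem h) with h | h
      exacts [hb1m h, hb2m h]
    · have : b1 * b2 * (x * y) = (b1 * x) * (b2 * y) := by ring
      rw [this]
      exact mul_mem hbx1 hbx2
  add_mem' := by
    rintro x y ⟨b1, hb1, hb1m, hbx1⟩ ⟨b2, hb2, hb2m, hbx2⟩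
    refine ⟨b1 * b2, mul_mem hb1 hb2, ?_, ?_⟩
    · intro h
      rcases ((maximalIdeal.isMaximal T).isPrime.mem_or_mem h) with h | h
      exacts [hb1m h, hb2m h]
    · have : b1 * b2 * (x + y) = b2 * (b1 * x) + b1 * (b2 * y) := by ring
      rw [this]
      exact add_mem (mul_mem hb2 hbx1) (mul_mem hb1 hbx2)
  neg_mem' := by
    rintro x ⟨b, hb, hbm, hbx⟩
    exact ⟨b, hb, hbm, by rw [mul_neg]; exact neg_mem hbx⟩

variable {R1 : Subring T}

lemma le_locSubring : R1 ≤ locSubring R1 := by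
  intro x hx
  exact ⟨1, one_mem _, fun h => (maximalIdeal.isMaximal T).ne_top
    ((Ideal.eq_top_iff_one _).mpr h), by simpa using hx⟩

lemma isUnit_subtype_of_not_mem {x : ↥(locSubring R1)} (hx : (x : T) ∉ maximalIdeal T) :
    IsUnit x := by
  obtain ⟨b, hb, hbm, hbx⟩ := x.2
  have ham : b * (x : T) ∉ maximalIdeal T := by
    intro h
    rcases ((maximalIdeal.isMaximal T).isPrime.mem_or_mem h) with h | h
    exacts [hbm h, hx h]
  have ha : IsUnit (b * (x : T)) := by
    rwa [mem_maximalIdeal, mem_nonunits_iff, not_not] at ham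
  set z : T := ↑ha.unit⁻¹ * b with hz
  have hzS : z ∈ locSubring R1 := by
    refine ⟨b * (x : T), hbx, ham, ?_⟩
    have : b * (x : T) * z = (↑ha.unit * ↑ha.unit⁻¹) * b := by
      rw [hz]; push_cast; ring_nf; rw [IsUnit.unit_spec]; ring
    rw [this, Units.mul_inv, one_mul]
    exact hb
  rw [isUnit_iff_exists_inv]
  refine ⟨⟨z, hzS⟩, ?_⟩
  apply Subtype.ext
  push_cast
  calc (x : T) * z = (↑ha.unit⁻¹ : T) * (b * x) := by rw [hz]; ring
    _ = (↑ha.unit⁻¹ : T) * ↑ha.unit := by rw [IsUnit.unit_spec]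
    _ = 1 := IsUnit.val_inv_mul ha

lemma mem_maximal_of_nonunit {x : ↥(locSubring R1)} (hx : ¬ IsUnit x) :
    (x : T) ∈ maximalIdeal T := by
  by_contra h
  exact hx (isUnit_subtype_of_not_mem h)

lemma not_mem_maximal_of_unit {x : ↥(locSubring R1)} (hx : IsUnit x) :
    (x : T) ∉ maximalIdeal T := by
  intro h
  obtain ⟨z, hz⟩ := isUnit_iff_exists_inv.mp hx
  have : (x : T) * (z : T) = 1 := by
    have := congrArg (Subtype.val) hz
    push_cast at this
    exact this
  have h1 : (1 : T) ∈ maximalIdeal T := this ▸ Ideal.mul_mem_right _ _ h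
  exact (maximalIdeal.isMaximal T).ne_top ((Ideal.eq_top_iff_one _).mpr h1)

lemma isLocalRing_locSubring : IsLocalRing ↥(locSubring R1) := by
  haveI : Nontrivial ↥(locSubring R1) := by
    refine nontrivial_of_ne 0 1 fun h => ?_
    have := congrArg (Subtype.val) h
    push_cast at this
    exact zero_ne_one this
  refine IsLocalRing.of_nonunits_add fun a b ha hb => ?_
  rw [mem_nonunits_iff] at ha hb ⊢
  intro hab
  have hma := mem_maximal_of_nonunit ha
  have hmb := mem_maximal_of_nonunit hb
  have : ((a + b : ↥(locSubring R1)) : T) ∈ maximalIdeal T := by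
    push_cast
    exact add_mem hma hmb
  exact not_mem_maximal_of_unit hab this

lemma comap_maximal_isMaximal :
    (Ideal.comap (locSubring R1).subtype (maximalIdeal T)).IsMaximal := by
  haveI := isLocalRing_locSubring (R1 := R1)
  have heq : Ideal.comap (locSubring R1).subtype (maximalIdeal T) =
      maximalIdeal ↥(locSubring R1) := by
    ext x
    rw [Ideal.mem_comap, mem_maximalIdeal, mem_nonunits_iff]
    constructor
    · intro h hu
      exact not_mem_maximal_of_unit hu h
    · intro h
      exact mem_maximal_of_nonunit h
  rw [heq]
  exact maximalIdeal.isMaximal _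

end PSubAux3

end PSubAuxSection

section MainProof

open Cardinal Polynomial PSubAux PSubAux2 PSubAux3

/-- Enlarging a `p`-subring to contain an associate of a given regular
element `y ∈ m \ p`. -/
theorem pSubring_adjoin_associate
    (T : Type*) [CommRing T] [IsLocalRing T] [IsNoetherianRing T]
    [IsAdicComplete (maximalIdeal T) T]
    (P : Ideal T) (hP : P.IsPrime) (hPm : P ≠ maximalIdeal T)
    (y : T) (hyreg : y ∈ nonZeroDivisors T) (hym : y ∈ maximalIdeal T) (hyP : y ∉ P)
    (R : Subring T) (hR : IsPSubring T P R) :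
    ∃ S : Subring T, IsPSubring T P S ∧ R ≤ S ∧ (∃ t : Tˣ, y * (t : T) ∈ S) ∧
      (Finite R → Countable S ∧ Infinite S) ∧
      (Infinite R → Cardinal.mk S = Cardinal.mk R) := by
  classical
  obtain ⟨hRloc, hRmax, hRcard, hRP, hRQ⟩ := hR
  -- primary decomposition of (0)
  obtain ⟨t, htinf, htprimary, -, htmin⟩ := Submodule.IsLasker.exists_isMinimalPrimaryDecomposition (Ideal.isLasker T T) (⊥ : Ideal T)
  -- every element of the radical of a component is a zerodivisor
  have hzd : ∀ J ∈ t, ∀ x ∈ Ideal.radical J, x ∉ nonZeroDivisors T := by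
    intro J hJ x hx hreg
    obtain ⟨z, hzmem, hznJ⟩ := SetLike.not_le_iff_exists.mp (htmin hJ)
    obtain ⟨k, hk⟩ := Ideal.mem_radical_iff.mp hx
    have hz0 : z ≠ 0 := fun h => hznJ (h ▸ zero_mem J)
    have hmem0 : x ^ k * z ∈ t.inf id := by
      rw [Submodule.mem_finsetInf]
      intro K hK
      by_cases hKJ : K = J
      · subst hKJ
        exact Ideal.mul_mem_right z _ hk
      · have hzK : z ∈ K := by
          have h2 := hzmem
          rw [Submodule.mem_finsetInf] at h2
          exact h2 K (Finset.mem_erase.mpr ⟨hKJ, hK⟩)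
        exact Ideal.mul_mem_left _ _ hzK
    rw [htinf, Ideal.mem_bot] at hmem0
    exact hz0 (mem_nonZeroDivisors_iff_right.mp (pow_mem hreg k) z
      (by rw [mul_comm]; exact hmem0))
  -- zerodivisors are covered by the radicals of the components
  have hcover : ∀ x : T, x ∉ nonZeroDivisors T → ∃ J ∈ t, x ∈ Ideal.radical J := by
    intro x hx
    rw [mem_nonZeroDivisors_iff_right] at hx
    push_neg at hx
    obtain ⟨z, hzx, hz0⟩ := hx
    have hznall : ¬ ∀ J ∈ t, z ∈ J := by
      intro h
      apply hz0
      have hzin : z ∈ t.inf id := Submodule.mem_finsetInf.mpr h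
      rw [htinf] at hzin
      simpa using hzin
    push_neg at hznall
    obtain ⟨J, hJt, hzJ⟩ := hznall
    refine ⟨J, hJt, ?_⟩
    rcases (Ideal.isPrimary_iff.mp (htprimary hJt)).2
      (show z * x ∈ J from by rw [hzx]; exact zero_mem J) with h | h
    · exact absurd h hzJ
    · exact h
  -- zerodivisors lie in some associated prime
  have hass : ∀ x : T, x ∉ nonZeroDivisors T → ∃ Q ∈ associatedPrimes T T, x ∈ Q := by
    intro x hx
    rw [mem_nonZeroDivisors_iff_right] at hx
    push_neg at hx
    obtain ⟨z, hzx, hz0⟩ := hx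
    obtain ⟨Q, hQ, hQle⟩ := exists_le_isAssociatedPrime_of_isNoetherianRing T z hz0
    refine ⟨Q, hQ, hQle ?_⟩
    rw [Submodule.mem_colon_singleton, smul_eq_mul, Submodule.mem_bot, mul_comm]
    exact hzx
  -- the finite set of primes to avoid
  set C : Finset (Ideal T) := insert P (t.image Ideal.radical) with hC
  have hCprime : ∀ q ∈ C, q.IsPrime := by
    intro q hq
    rw [hC, Finset.mem_insert] at hq
    rcases hq with rfl | hq
    · exact hP
    · obtain ⟨J, hJ, rfl⟩ := Finset.mem_image.mp hq
      exact Ideal.isPrime_radical (htprimary hJ)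
  have hCy : ∀ q ∈ C, y ∉ q := by
    intro q hq
    rw [hC, Finset.mem_insert] at hq
    rcases hq with rfl | hq
    · exact hyP
    · obtain ⟨J, hJ, rfl⟩ := Finset.mem_image.mp hq
      exact fun h => hzd J hJ y h hyreg
  have hCR : ∀ q ∈ C, ∀ r : ↥R, (r : T) ∈ q → r = 0 := by
    intro q hq r hr
    rw [hC, Finset.mem_insert] at hq
    rcases hq with h | hq
    · have h2 : r ∈ Ideal.comap R.subtype P := by rw [← h]; exact hr
      rw [hRP] at h2
      simpa using h2
    · obtain ⟨J, hJ, rfl⟩ := Finset.mem_image.mp hq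
      obtain ⟨Q, hQ, hrQ⟩ := hass _ (hzd J hJ _ hr)
      have h2 : r ∈ Ideal.comap R.subtype Q := hrQ
      rw [hRQ Q hQ] at h2
      simpa using h2
  -- residue field bound
  have hRFle : ∀ q ∈ C, Cardinal.mk (ResidueField T) ≤ Cardinal.mk (T ⧸ q) := by
    intro q hq
    have hle : q ≤ maximalIdeal T := le_maximalIdeal (hCprime q hq).ne_top
    have hsurj : Function.Surjective (Ideal.Quotient.factor hle) := by
      intro b
      obtain ⟨a, rfl⟩ := Ideal.Quotient.mk_surjective b
      exact ⟨Ideal.Quotient.mk q a, Ideal.Quotient.factor_mk hle a⟩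
    exact Cardinal.mk_le_of_surjective hsurj
  -- R residue comparison
  have hRlt : Cardinal.aleph0 < Cardinal.mk (ResidueField T) →
      Cardinal.mk ↥R < Cardinal.mk (ResidueField T) := by
    intro hRF
    have h1 : Cardinal.mk ↥R ≤ max Cardinal.aleph0 (Cardinal.mk (ResidueField T)) := hRcard.1
    rw [max_eq_right hRF.le] at h1
    refine lt_of_le_of_ne h1 ?_
    intro heq
    have h2 := hRcard.2 (by rw [max_eq_right hRF.le]; exact heq)
    exact absurd h2 (not_le.mpr hRF)
  have hbig : ∀ q ∈ C, max Cardinal.aleph0 (Cardinal.mk ↥R) < Cardinal.mk (T ⧸ q) := by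
    intro q hq
    have hcont : Cardinal.continuum ≤ Cardinal.mk (T ⧸ q) :=
      continuum_le_mk_quotient q (hCprime q hq) hym (hCy q hq)
    rcases le_or_gt (Cardinal.mk ↥R) Cardinal.aleph0 with h | h
    · rw [max_eq_left h]
      exact lt_of_lt_of_le Cardinal.aleph0_lt_continuum hcont
    · rw [max_eq_right h.le]
      have hRF : Cardinal.aleph0 < Cardinal.mk (ResidueField T) := by
        by_contra hle
        push_neg at hle
        have h1 := hRcard.1
        rw [max_eq_left hle] at h1
        exact absurd h1 (not_le.mpr h)
      exact lt_of_lt_of_le (hRlt hRF) (hRFle q hq)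
  -- bad residue sets
  set ι : ↥R →+* T := R.subtype with hι
  set V : (q : Ideal T) → Set (T ⧸ q) := fun q =>
    {b | ∃ f : Polynomial ↥R, f ≠ 0 ∧
      Polynomial.eval (Ideal.Quotient.mk q y + (Ideal.Quotient.mk q y) ^ 2 * b)
        (Polynomial.map ((Ideal.Quotient.mk q).comp ι) f) = 0} with hVdef
  have hVsmall : ∀ q ∈ C, Cardinal.mk (V q) < Cardinal.mk (T ⧸ q) := by
    intro q hq
    haveI : q.IsPrime := hCprime q hq
    haveI : IsDomain (T ⧸ q) := Ideal.Quotient.isDomain q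
    have hy0 : Ideal.Quotient.mk q y ≠ 0 := by
      rw [Ne, Ideal.Quotient.eq_zero_iff_mem]
      exact hCy q hq
    have hy2 : (Ideal.Quotient.mk q y) ^ 2 ≠ 0 := pow_ne_zero 2 hy0
    set g : Polynomial (T ⧸ q) :=
      Polynomial.C (Ideal.Quotient.mk q y) +
        Polynomial.C ((Ideal.Quotient.mk q y) ^ 2) * Polynomial.X with hg
    have hsub : V q ⊆ ⋃ f : {f : Polynomial ↥R // f ≠ 0},
        {b | Polynomial.IsRoot
          ((Polynomial.map ((Ideal.Quotient.mk q).comp ι) f.1).comp g) b} := by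
      intro b hb
      obtain ⟨f, hf0, hf⟩ := hb
      refine Set.mem_iUnion.mpr ⟨⟨f, hf0⟩, ?_⟩
      show Polynomial.eval b _ = 0
      rw [Polynomial.eval_comp]
      convert hf using 2
      · rfl
      · simp [hg]
    have hfin : ∀ f : {f : Polynomial ↥R // f ≠ 0},
        Cardinal.mk ({b | Polynomial.IsRoot
          ((Polynomial.map ((Ideal.Quotient.mk q).comp ι) f.1).comp g) b} : Set (T ⧸ q)) ≤
          Cardinal.aleph0 := by
      intro f
      have hinj : Function.Injective ((Ideal.Quotient.mk q).comp ι) := by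
        rw [injective_iff_map_eq_zero]
        intro r hr
        have hrq : (r : T) ∈ q := by
          rwa [RingHom.comp_apply, Ideal.Quotient.eq_zero_iff_mem] at hr
        exact hCR q hq r hrq
      have hf0 : Polynomial.map ((Ideal.Quotient.mk q).comp ι) f.1 ≠ 0 := by
        intro h
        exact f.2 (Polynomial.map_injective _ hinj (by simpa using h))
      have hcomp : (Polynomial.map ((Ideal.Quotient.mk q).comp ι) f.1).comp g ≠ 0 := by
        intro h
        rcases Polynomial.comp_eq_zero_iff.mp h with h | ⟨-, hgC⟩
        · exact hf0 h
        · have h1 : g.coeff 1 = (Ideal.Quotient.mk q y) ^ 2 := by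
            rw [hg, Polynomial.coeff_add, Polynomial.coeff_C, Polynomial.coeff_C_mul,
              Polynomial.coeff_X_one]
            simp
          rw [hgC, Polynomial.coeff_C] at h1
          simp at h1
          exact hy2 h1.symm
      exact ((Polynomial.finite_setOf_isRoot hcomp).lt_aleph0).le
    refine lt_of_le_of_lt ?_ (hbig q hq)
    refine le_trans (Cardinal.mk_le_mk_of_subset hsub) ?_
    refine le_trans (Cardinal.mk_iUnion_le _) ?_
    have h1 : Cardinal.mk {f : Polynomial ↥R // f ≠ 0} ≤
        max Cardinal.aleph0 (Cardinal.mk ↥R) := by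
      refine le_trans (Cardinal.mk_subtype_le _) ?_
      refine le_trans Polynomial.cardinalMk_le_max ?_
      rw [max_comm]
    have h2 : (⨆ f : {f : Polynomial ↥R // f ≠ 0}, Cardinal.mk
        ({b | Polynomial.IsRoot
          ((Polynomial.map ((Ideal.Quotient.mk q).comp ι) f.1).comp g) b} : Set (T ⧸ q))) ≤
        Cardinal.aleph0 := ciSup_le' hfin
    calc Cardinal.mk {f : Polynomial ↥R // f ≠ 0} * _ ≤
          max Cardinal.aleph0 (Cardinal.mk ↥R) * Cardinal.aleph0 := mul_le_mul' h1 h2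
      _ ≤ max Cardinal.aleph0 (Cardinal.mk ↥R) * max Cardinal.aleph0 (Cardinal.mk ↥R) :=
          mul_le_mul' le_rfl (le_max_left _ _)
      _ = max Cardinal.aleph0 (Cardinal.mk ↥R) := Cardinal.mul_eq_self (le_max_left _ _)
  -- find the good translate
  obtain ⟨a, -, ha⟩ := avoid C.card C rfl hCprime V hVsmall ⊤
    (fun q hq => ⟨1, Submodule.mem_top,
      fun h => (hCprime q hq).ne_top ((Ideal.eq_top_iff_one q).mpr h)⟩) 0
  set t0 : T := 1 + a * y with ht0
  have ht0m : t0 ∉ maximalIdeal T := by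
    intro h
    have h1 : (1 : T) ∈ maximalIdeal T := by
      have he : (1 : T) = t0 - a * y := by rw [ht0]; ring
      rw [he]
      exact sub_mem h (Ideal.mul_mem_left _ _ hym)
    exact (maximalIdeal.isMaximal T).ne_top ((Ideal.eq_top_iff_one _).mpr h1)
  have ht0u : IsUnit t0 := by
    rwa [mem_maximalIdeal, mem_nonunits_iff, not_not] at ht0m
  set w : T := y * t0 with hw
  have hKEY : ∀ f : Polynomial ↥R, f ≠ 0 → ∀ q ∈ C,
      Polynomial.eval w (Polynomial.map ι f) ∉ q := by
    intro f hf0 q hq hmem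
    apply ha q hq
    refine ⟨f, hf0, ?_⟩
    have hπw : Ideal.Quotient.mk q w =
        Ideal.Quotient.mk q y + (Ideal.Quotient.mk q y) ^ 2 * Ideal.Quotient.mk q a := by
      have he : w = y + y ^ 2 * a := by rw [hw, ht0]; ring
      rw [he]
      simp [map_add, map_mul, map_pow]
    rw [← hπw, ← Polynomial.map_map, Polynomial.eval_map, Polynomial.eval₂_at_apply,
      Ideal.Quotient.eq_zero_iff_mem]
    exact hmem
  -- the intermediate ring R1 = R[w]
  set R1 : Subring T := (Polynomial.eval₂RingHom ι w).range with hR1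
  have hmemR1 : ∀ x : T, x ∈ R1 ↔
      ∃ f : Polynomial ↥R, Polynomial.eval w (Polynomial.map ι f) = x := by
    intro x
    constructor
    · intro hx
      obtain ⟨f, hf⟩ := RingHom.mem_range.mp hx
      refine ⟨f, ?_⟩
      rw [← Polynomial.eval₂_eq_eval_map]
      rw [Polynomial.coe_eval₂RingHom] at hf
      exact hf
    · rintro ⟨f, rfl⟩
      exact RingHom.mem_range.mpr ⟨f, by
        rw [Polynomial.coe_eval₂RingHom, Polynomial.eval₂_eq_eval_map]⟩
  have hRleR1 : ∀ r : ↥R, (r : T) ∈ R1 := fun r =>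
    RingHom.mem_range.mpr ⟨Polynomial.C r, by simp [hι]⟩
  have hwR1 : w ∈ R1 := RingHom.mem_range.mpr ⟨Polynomial.X, by simp⟩
  have hR1q : ∀ q ∈ C, ∀ x ∈ R1, x ∈ q → x = 0 := by
    intro q hq x hx hxq
    obtain ⟨f, rfl⟩ := (hmemR1 x).mp hx
    by_cases hf : f = 0
    · simp [hf]
    · exact absurd hxq (hKEY f hf q hq)
  set S : Subring T := locSubring R1 with hS
  have hq_of_S : ∀ q ∈ C, ∀ x ∈ S, x ∈ q → x = 0 := by
    intro q hq x hxS hxq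
    obtain ⟨b, hb, hbm, hbx⟩ := hxS
    have hbxq : b * x ∈ q := Ideal.mul_mem_left q b hxq
    have h0 : b * x = 0 := hR1q q hq _ hbx hbxq
    have hbu : IsUnit b := by
      rwa [mem_maximalIdeal, mem_nonunits_iff, not_not] at hbm
    exact hbu.mul_left_cancel (by rw [h0, mul_zero])
  have hScomap : ∀ q ∈ C, Ideal.comap S.subtype q = ⊥ := by
    intro q hq
    ext x
    rw [Ideal.mem_comap, Ideal.mem_bot]
    constructor
    · intro h
      exact Subtype.ext (hq_of_S q hq x.1 x.2 h)
    · rintro rfl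
      simp
  have hSQ : ∀ Q ∈ associatedPrimes T T, Ideal.comap S.subtype Q = ⊥ := by
    intro Q hQ
    ext x
    rw [Ideal.mem_comap, Ideal.mem_bot]
    constructor
    · intro h
      refine Subtype.ext ?_
      by_contra hx0
      have hzd' : (x : T) ∉ nonZeroDivisors T := by
        obtain ⟨hQp, z, hz⟩ := isAssociatedPrime_iff.mp hQ
        intro hreg
        have hz0 : z ≠ 0 := by
          intro h0
          apply hQp.ne_top
          rw [hz, h0]; ext r; simp [Submodule.mem_colon_singleton]
        have hxz : (x : T) * z = 0 := by
          have h2 := h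
          rw [hz, Submodule.mem_colon_singleton, smul_eq_mul, Submodule.mem_bot] at h2
          exact h2
        exact hz0 (mem_nonZeroDivisors_iff_right.mp hreg z (by rw [mul_comm]; exact hxz))
      obtain ⟨J, hJ, hxJ⟩ := hcover _ hzd'
      exact hx0 (hq_of_S (Ideal.radical J)
        (Finset.mem_insert_of_mem (Finset.mem_image_of_mem _ hJ)) x.1 x.2 hxJ)
    · rintro rfl
      simp
  -- cardinality of S
  have hchoice : ∀ x : ↥S, ∃ p : ↥R1 × ↥R1, (p.1 : T) ∉ maximalIdeal T ∧
      (p.1 : T) * (x : T) = (p.2 : T) := by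
    rintro ⟨x, b, hb, hbm, hbx⟩
    exact ⟨(⟨b, hb⟩, ⟨b * x, hbx⟩), hbm, rfl⟩
  choose Φ hΦ1 hΦ2 using hchoice
  have hΦinj : Function.Injective Φ := by
    intro x x' h
    have h1 := hΦ2 x
    have h2 := hΦ2 x'
    have hfst : ((Φ x).1 : T) = ((Φ x').1 : T) := by rw [h]
    have hsnd : ((Φ x).2 : T) = ((Φ x').2 : T) := by rw [h]
    have hbu : IsUnit ((Φ x).1 : T) := by
      have h3 := hΦ1 x
      rwa [mem_maximalIdeal, mem_nonunits_iff, not_not] at h3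
    refine Subtype.ext (hbu.mul_left_cancel ?_)
    rw [h1, hsnd, ← h2, hfst]
  have hcardS : Cardinal.mk ↥S ≤ max Cardinal.aleph0 (Cardinal.mk ↥R) := by
    have h1 : Cardinal.mk ↥S ≤ Cardinal.mk (↥R1 × ↥R1) := Cardinal.mk_le_of_injective hΦinj
    have h2 : Cardinal.mk ↥R1 ≤ max Cardinal.aleph0 (Cardinal.mk ↥R) := by
      have hsur : Function.Surjective (Polynomial.eval₂RingHom ι w).rangeRestrict :=
        RingHom.rangeRestrict_surjective _
      refine le_trans (Cardinal.mk_le_of_surjective hsur) ?_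
      refine le_trans Polynomial.cardinalMk_le_max ?_
      rw [max_comm]
    have h3 : Cardinal.mk (↥R1 × ↥R1) = Cardinal.mk ↥R1 * Cardinal.mk ↥R1 := by
      simp [Cardinal.mk_prod]
    calc Cardinal.mk ↥S ≤ Cardinal.mk (↥R1 × ↥R1) := h1
      _ = Cardinal.mk ↥R1 * Cardinal.mk ↥R1 := h3
      _ ≤ max Cardinal.aleph0 (Cardinal.mk ↥R) * max Cardinal.aleph0 (Cardinal.mk ↥R) :=
          mul_le_mul' h2 h2
      _ = max Cardinal.aleph0 (Cardinal.mk ↥R) := Cardinal.mul_eq_self (le_max_left _ _)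
  have hRS : R ≤ S := by
    intro x hx
    exact le_locSubring (hRleR1 ⟨x, hx⟩)
  -- w powers are distinct
  have hwreg : w ∈ nonZeroDivisors T := mul_mem hyreg ht0u.mem_nonZeroDivisors
  have hwm : w ∈ maximalIdeal T := Ideal.mul_mem_right t0 _ hym
  have hwpow : Function.Injective (fun n : ℕ => w ^ n) := by
    have hlt : ∀ i j : ℕ, i < j → w ^ i ≠ w ^ j := by
      intro i j hij heq
      have h2 : (1 : T) * w ^ i = w ^ (j - i) * w ^ i := by
        rw [one_mul, ← pow_add]
        rw [show j - i + i = j from by omega]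
        exact heq
      have h3 := (mul_cancel_right_mem_nonZeroDivisors (pow_mem hwreg i)).mp h2
      have h1m : (1 : T) ∈ maximalIdeal T := by
        rw [h3, show w ^ (j - i) = w ^ (j - i - 1) * w from by
          rw [← pow_succ]; congr 1; omega]
        exact Ideal.mul_mem_left _ _ hwm
      exact (maximalIdeal.isMaximal T).ne_top ((Ideal.eq_top_iff_one _).mpr h1m)
    intro i j h
    rcases lt_trichotomy i j with hlt' | he | hlt'
    · exact absurd h (hlt i j hlt')
    · exact he
    · exact absurd h.symm (hlt j i hlt')
  have hSinf : Infinite ↥S := by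
    refine Infinite.of_injective
      (fun n : ℕ => (⟨w ^ n, le_locSubring (pow_mem hwR1 n)⟩ : ↥S)) ?_
    intro i j h
    exact hwpow (congrArg Subtype.val h)
  -- assemble
  refine ⟨S, ⟨isLocalRing_locSubring, comap_maximal_isMaximal, ⟨?_, ?_⟩, ?_, hSQ⟩, hRS,
    ⟨ht0u.unit, ?_⟩, ?_, ?_⟩
  · exact le_trans hcardS (max_le (le_max_left _ _) hRcard.1)
  · intro hEq
    by_contra hRF
    rw [not_le] at hRF
    have hlt2 : max Cardinal.aleph0 (Cardinal.mk ↥R) < Cardinal.mk (ResidueField T) :=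
      max_lt hRF (hRlt hRF)
    have hlt3 : Cardinal.mk ↥S < Cardinal.mk (ResidueField T) := lt_of_le_of_lt hcardS hlt2
    rw [hEq, max_eq_right hRF.le] at hlt3
    exact lt_irrefl _ hlt3
  · exact hScomap P (Finset.mem_insert_self _ _)
  · rw [IsUnit.unit_spec]
    exact le_locSubring hwR1
  · intro hfin
    refine ⟨?_, hSinf⟩
    have hfR : Cardinal.mk ↥R < Cardinal.aleph0 := by
      rw [Cardinal.lt_aleph0_iff_finite]
      exact hfin
    have hle : Cardinal.mk ↥S ≤ Cardinal.aleph0 :=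
      le_trans hcardS (le_of_eq (max_eq_left hfR.le))
    exact Cardinal.mk_le_aleph0_iff.mp hle
  · intro hinf
    refine le_antisymm ?_ ?_
    · rw [max_eq_right (Cardinal.infinite_iff.mp hinf)] at hcardS
      exact hcardS
    · refine Cardinal.mk_le_of_injective (f := fun r : ↥R => (⟨r.1, hRS r.2⟩ : ↥S)) ?_
      intro r r' h
      exact Subtype.ext (by simpa using congrArg Subtype.val h)


end MainProof
end

section
/- Let (T,m) be a complete local ring and let Π be the prime subring of T. Suppose that all nonzero elements of Π are regular elements of T and let p be a nonmaximal prime ideal of T such that Π ∩ p = (0). Let y_1, y_2, … be a countable collection of regular elements of T with y_i ∈ m \ p for all i. Then there exists a countably infinite p-subring (R, R∩m) of T such that, for every i, there is a unit t_i of T with y_i t_i ∈ R. -/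
open IsLocalRing

open IsLocalRing Polynomial

section AuxCL
variable {T : Type*} [CommRing T]

theorem CLaux.exists_adic_lim [IsLocalRing T] [IsAdicComplete (maximalIdeal T) T]
    (f : ℕ → T) (hf : ∀ {m n : ℕ}, m ≤ n → f n - f m ∈ maximalIdeal T ^ m) :
    ∃ L, ∀ n, L - f n ∈ maximalIdeal T ^ n := by
  obtain ⟨L, hL⟩ := IsPrecomplete.prec
    (IsAdicComplete.toIsPrecomplete : IsPrecomplete (maximalIdeal T) T) (f := f) (by
    intro m n hmn
    rw [SModEq.sub_mem]
    simpa [smul_eq_mul, Ideal.mul_top] using (maximalIdeal T ^ m).neg_mem (hf hmn))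
  refine ⟨L, fun n => ?_⟩
  have := (hL n)
  rw [SModEq.sub_mem] at this
  have : f n - L ∈ maximalIdeal T ^ n := by simpa [smul_eq_mul, Ideal.mul_top] using this
  simpa using (maximalIdeal T ^ n).neg_mem this

theorem CLaux.eq_of_adic_small [IsLocalRing T] [IsAdicComplete (maximalIdeal T) T]
    (x : T) (h : ∀ n, x ∈ maximalIdeal T ^ n) : x = 0 := by
  refine IsHausdorff.haus (IsAdicComplete.toIsHausdorff : IsHausdorff (maximalIdeal T) T)
    x fun n => ?_
  rw [SModEq.sub_mem]
  simpa [smul_eq_mul, Ideal.mul_top] using h n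

variable [IsLocalRing T] [IsAdicComplete (maximalIdeal T) T]

/-- key family of units parametrized by boolean sequences, pairwise differing by
`y^(n+1) * unit`. -/
theorem CLaux.exists_unit_family {y : T} (hy : y ∈ maximalIdeal T) :
    ∃ u : (ℕ → Bool) → T, (∀ a, u a - 1 ∈ maximalIdeal T) ∧
      (∀ a b : ℕ → Bool, a ≠ b →
        ∃ (n : ℕ) (w : T), w ∉ maximalIdeal T ∧ u a - u b = y ^ (n + 1) * w) := by
  classical
  set m := maximalIdeal T with hm
  -- partial sums
  set psum : (ℕ → Bool) → ℕ → T :=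
    fun a N => ∑ n ∈ Finset.range N, (if a n then y ^ (n + 1) else 0) with hpsum
  have hcauchy : ∀ (a : ℕ → Bool) {M N : ℕ}, M ≤ N → psum a N - psum a M ∈ m ^ M := by
    intro a M N hMN
    obtain ⟨k, rfl⟩ := Nat.exists_eq_add_of_le hMN
    rw [hpsum]
    simp only [Finset.sum_range_add, add_sub_cancel_left]
    refine Submodule.sum_mem _ fun i _ => ?_
    split
    · exact Ideal.pow_le_pow_right (by omega) (Ideal.pow_mem_pow hy (M + i + 1))
    · exact Submodule.zero_mem _
  have hLa : ∀ a : ℕ → Bool, ∃ L, ∀ n, L - psum a n ∈ m ^ n :=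
    fun a => CLaux.exists_adic_lim _ (fun {M N} h => hcauchy a h)
  choose L hL using hLa
  refine ⟨fun a => 1 + L a, ?_, ?_⟩
  · intro a
    have h1 : L a - psum a 1 ∈ m := by simpa using hL a 1
    have h2 : psum a 1 ∈ m := by
      rw [hpsum]
      simp only [Finset.sum_range_one]
      split
      · simpa using Ideal.pow_mem_pow hy 1
      · exact Submodule.zero_mem _
    have : L a ∈ m := by
      have := Submodule.add_mem m h1 h2
      simpa using this
    simpa using this
  -- main pairwise statement
  intro a b hab
  -- reduce to the asymmetric core
  suffices core : ∀ a b : ℕ → Bool, ∀ d : ℕ, (∀ k, k < d → a k = b k) →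
      a d = true → b d = false →
      ∃ w : T, w ∉ m ∧ L a - L b = y ^ (d + 1) * w by
    obtain ⟨d, hd⟩ := Function.ne_iff.mp hab
    have hex : ∃ d, a d ≠ b d := ⟨d, hd⟩
    set d0 := Nat.find hex with hd0
    have hne : a d0 ≠ b d0 := Nat.find_spec hex
    have hmin : ∀ k, k < d0 → a k = b k := fun k hk => by
      by_contra h
      exact absurd (Nat.find_min hex hk) (by simpa using h)
    cases ha0 : a d0 with
    | false =>
      have hb0 : b d0 = true := by
        cases hb : b d0
        · exact absurd (ha0.trans hb.symm) hne
        · rfl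
      obtain ⟨w, hw, hwe⟩ := core b a d0 (fun k hk => (hmin k hk).symm) hb0 ha0
      refine ⟨d0, -w, fun hc => hw (by simpa using m.neg_mem hc), ?_⟩
      have : (1 + L a) - (1 + L b) = -(L b - L a) := by ring
      rw [this, hwe]; ring
    | true =>
      have hb0 : b d0 = false := by
        cases hb : b d0
        · rfl
        · exact absurd (ha0.trans hb.symm) hne
      obtain ⟨w, hw, hwe⟩ := core a b d0 hmin ha0 hb0
      refine ⟨d0, w, hw, ?_⟩
      have : (1 + L a) - (1 + L b) = L a - L b := by ring
      rw [this, hwe]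
  -- core proof
  clear hab a b
  intro a b d hmin ha hb
  set e : ℕ → T := fun k =>
    (if a (d + k) then (1 : T) else 0) - (if b (d + k) then (1 : T) else 0) with he
  set W : ℕ → T := fun N => ∑ k ∈ Finset.range N, e k * y ^ k with hW
  have hWc : ∀ {M N : ℕ}, M ≤ N → W N - W M ∈ m ^ M := by
    intro M N hMN
    obtain ⟨k, rfl⟩ := Nat.exists_eq_add_of_le hMN
    rw [hW]
    simp only [Finset.sum_range_add, add_sub_cancel_left]
    refine Submodule.sum_mem _ fun i _ => ?_
    exact Ideal.mul_mem_left _ _ (Ideal.pow_le_pow_right (by omega) (Ideal.pow_mem_pow hy (M + i)))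
  obtain ⟨w, hw⟩ := CLaux.exists_adic_lim W (fun {M N} h => hWc h)
  have hw1 : w - 1 ∈ m := by
    have h1 := hw 1
    have : W 1 = 1 := by
      rw [hW]
      simp only [Finset.sum_range_one, pow_zero, mul_one, he, Nat.add_zero]
      simp only [ha, hb, if_true, if_false]
      norm_num
    rw [this] at h1
    simpa only [pow_one] using Ideal.pow_le_pow_right (le_refl 1) h1
  refine ⟨w, fun hc => ?_, ?_⟩
  · have h1m : (1 : T) ∈ m := by
      have := m.sub_mem hc hw1
      simpa using this
    exact (maximalIdeal.isMaximal T).ne_top ((Ideal.eq_top_iff_one _).mpr h1m)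
  · -- the identity L a - L b = y^(d+1) * w
    refine sub_eq_zero.mp (CLaux.eq_of_adic_small _ fun N => ?_)
    have key : psum a (d + (N + 1)) - psum b (d + (N + 1)) = y ^ (d + 1) * W (N + 1) := by
      rw [hpsum, hW, ← Finset.sum_sub_distrib, Finset.sum_range_add, Finset.mul_sum]
      have h0 : ∀ n ∈ Finset.range d,
          ((if a n then y ^ (n + 1) else 0) - if b n then y ^ (n + 1) else 0) = 0 := by
        intro n hn
        rw [hmin n (Finset.mem_range.mp hn)]
        ring
      rw [Finset.sum_congr rfl h0]
      simp only [Finset.sum_const_zero, zero_add]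
      refine Finset.sum_congr rfl fun k _ => ?_
      rw [he]
      have : y ^ (d + 1) * (((if a (d + k) then (1:T) else 0) -
          (if b (d + k) then (1:T) else 0)) * y ^ k)
          = ((if a (d + k) then (1:T) else 0) - (if b (d + k) then (1:T) else 0)) * y ^ (d + k + 1) := by
        rw [show d + k + 1 = (d + 1) + k by omega, pow_add]; ring
      rw [this]
      by_cases h1 : a (d + k) = true <;> by_cases h2 : b (d + k) = true <;>
        simp [h1, h2]
    have t1 : L a - psum a (d + (N + 1)) ∈ m ^ N :=
      Ideal.pow_le_pow_right (m := N) (n := d + (N + 1)) (by omega) (hL a (d + (N + 1)))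
    have t2 : L b - psum b (d + (N + 1)) ∈ m ^ N :=
      Ideal.pow_le_pow_right (m := N) (n := d + (N + 1)) (by omega) (hL b (d + (N + 1)))
    have t3 : y ^ (d + 1) * (W (N + 1) - w) ∈ m ^ N := by
      refine Ideal.mul_mem_left _ _
        (Ideal.pow_le_pow_right (m := N) (n := N + 1) (by omega) ?_)
      simpa [neg_sub] using Submodule.neg_mem _ (hw (N + 1))
    have := Submodule.add_mem _ (Submodule.sub_mem _ t1 t2) t3
    have heq : (L a - psum a (d + (N + 1)) - (L b - psum b (d + (N + 1)))
        + y ^ (d + 1) * (W (N + 1) - w))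
        = L a - L b - y ^ (d + 1) * w + (psum b (d + (N+1)) - psum a (d + (N+1)) + y ^ (d+1) * W (N+1)) := by
      ring
    rw [heq] at this
    have : L a - L b - y ^ (d + 1) * w ∈ m ^ N := by
      have h4 : (psum b (d + (N+1)) - psum a (d + (N+1)) + y ^ (d+1) * W (N+1)) = 0 := by
        rw [← key]; ring
      simpa [h4] using this
    exact this

end AuxCL


theorem CLaux.exists_prime_cover (T : Type*) [CommRing T] [IsNoetherianRing T] :
    ∃ 𝒥 : Set (Ideal T), 𝒥.Finite ∧ (∀ J ∈ 𝒥, J.IsPrime) ∧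
      (∀ J ∈ 𝒥, ∀ r ∈ J, r ∉ nonZeroDivisors T) ∧
      (∀ r : T, r ∉ nonZeroDivisors T → ∃ J ∈ 𝒥, r ∈ J) := by
  classical
  obtain ⟨t, ht0, htprim, -, htirr⟩ := Ideal.IsLasker.minimal (Ideal.isLasker T T) (⊥ : Ideal T)
  refine ⟨(fun J : Ideal T => J.radical) '' ↑t, (t.finite_toSet.image _), ?_, ?_, ?_⟩
  · rintro _ ⟨J, hJ, rfl⟩
    exact Ideal.isPrime_radical (htprim hJ)
  · rintro _ ⟨J, hJt, rfl⟩ r hr hreg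
    -- irredundancy: pick x in the inf of the others, not in J
    have hJt' : J ∈ t := hJt
    obtain ⟨x, hx1, hx2⟩ := SetLike.not_le_iff_exists.mp (htirr hJt')
    have hx0 : x ≠ 0 := fun h => hx2 (h ▸ J.zero_mem)
    obtain ⟨n, hn⟩ := Ideal.mem_radical_iff.mp hr
    -- r ^ n * x = 0
    have hrnx : r ^ n * x = 0 := by
      have h1 : r ^ n * x ∈ J := J.mul_mem_right _ hn
      have h2 : r ^ n * x ∈ (t.erase J).inf id := Ideal.mul_mem_left _ _ hx1
      have : r ^ n * x ∈ t.inf id := by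
        rw [← Finset.insert_erase hJt', Finset.inf_insert]
        exact ⟨h1, h2⟩
      rwa [ht0, Ideal.mem_bot] at this
    have hex : ∃ k, r ^ k * x = 0 := ⟨n, hrnx⟩
    set k0 := Nat.find hex with hk0
    have hk0pos : k0 ≠ 0 := by
      intro h
      have := Nat.find_spec hex
      rw [← hk0, h] at this
      simp only [pow_zero, one_mul] at this
      exact hx0 this
    have hv : r ^ (k0 - 1) * x ≠ 0 := Nat.find_min hex (by omega)
    have : r ^ (k0 - 1) * x * r = 0 := by
      have := Nat.find_spec hex
      rw [← hk0] at this
      have hk : k0 - 1 + 1 = k0 := by omega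
      calc r ^ (k0 - 1) * x * r = r ^ (k0 - 1) * r * x := by ring
      _ = r ^ k0 * x := by rw [← pow_succ, hk]
      _ = 0 := this
    exact hv ((mem_nonZeroDivisors_iff.mp hreg).2 _ this)
  · intro r hr
    rw [mem_nonZeroDivisors_iff_right] at hr
    push_neg at hr
    obtain ⟨v, hv0, hv⟩ := hr
    have : v ∉ (⊥ : Ideal T) := by simpa [Ideal.mem_bot] using hv
    rw [← ht0] at this
    rw [Submodule.mem_finsetInf] at this
    push_neg at this
    obtain ⟨J, hJt, hvJ⟩ := this
    refine ⟨Ideal.radical J, ⟨J, hJt, rfl⟩, ?_⟩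
    have := (Ideal.isPrimary_iff.mp (htprim hJt)).2 (x := v) (y := r)
      (by rw [hv0]; exact J.zero_mem)
    exact this.resolve_left hvJ



open IsLocalRing Polynomial

namespace CLaux
variable {T : Type*} [CommRing T]

/-- Polynomials with coefficients in a subring `S`, evaluated at `z`. -/
def polyAdjoin (S : Subring T) (z : T) : Subring T where
  carrier := {x | ∃ g : T[X], (∀ n, g.coeff n ∈ S) ∧ g.eval z = x}
  zero_mem' := ⟨0, by simp [S.zero_mem], by simp⟩
  one_mem' := ⟨1, fun n => by
    rw [Polynomial.coeff_one]
    split <;> simp [S.zero_mem, S.one_mem], by simp⟩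
  add_mem' := by
    rintro a b ⟨g, hg, rfl⟩ ⟨h, hh, rfl⟩
    exact ⟨g + h, fun n => by simpa using S.add_mem (hg n) (hh n), by simp⟩
  mul_mem' := by
    rintro a b ⟨g, hg, rfl⟩ ⟨h, hh, rfl⟩
    refine ⟨g * h, fun n => ?_, by simp⟩
    rw [Polynomial.coeff_mul]
    exact S.toSubsemiring.sum_mem fun c _ => S.mul_mem (hg c.1) (hh c.2)
  neg_mem' := by
    rintro a ⟨g, hg, rfl⟩
    exact ⟨-g, fun n => by simpa using S.neg_mem (hg n), by simp⟩

theorem mem_polyAdjoin_iff {S : Subring T} {z x : T} :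
    x ∈ polyAdjoin S z ↔ ∃ g : T[X], (∀ n, g.coeff n ∈ S) ∧ g.eval z = x := Iff.rfl

theorem le_polyAdjoin (S : Subring T) (z : T) : S ≤ polyAdjoin S z := by
  intro s hs
  refine ⟨Polynomial.C s, fun n => ?_, by simp⟩
  rw [Polynomial.coeff_C]
  split <;> simp [hs, S.zero_mem]

theorem self_mem_polyAdjoin (S : Subring T) (z : T) : z ∈ polyAdjoin S z := by
  refine ⟨Polynomial.X, fun n => ?_, by simp⟩
  rw [Polynomial.coeff_X]
  split <;> simp [S.zero_mem, S.one_mem]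

theorem countable_poly (S : Subring T) [Countable S] :
    Countable {g : T[X] // ∀ n, g.coeff n ∈ S} := by
  have : Function.Injective
      (fun g : {g : T[X] // ∀ n, g.coeff n ∈ S} =>
        ((List.range (g.1.natDegree + 1)).map fun n => (⟨g.1.coeff n, g.2 n⟩ : S))) := by
    intro g h hgh
    have hlen : g.1.natDegree = h.1.natDegree := by
      have := congrArg List.length hgh
      simpa using this
    ext1
    ext n
    by_cases hn : n ≤ g.1.natDegree
    · have h1 := congrArg (fun l => l[n]?) hgh
      simp only [List.getElem?_map, List.getElem?_range (by omega : n < g.1.natDegree + 1)] at h1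
      rw [List.getElem?_range (by omega : n < h.1.natDegree + 1)] at h1
      simpa [Subtype.ext_iff] using h1
    · rw [Polynomial.coeff_eq_zero_of_natDegree_lt (by omega),
        Polynomial.coeff_eq_zero_of_natDegree_lt (by omega)]
  exact Function.Injective.countable this

theorem countable_polyAdjoin (S : Subring T) [Countable S] (z : T) :
    Countable (polyAdjoin S z) := by
  have hsurj : Function.Surjective
      (fun g : {g : T[X] // ∀ n, g.coeff n ∈ S} =>
        (⟨g.1.eval z, g.1, g.2, rfl⟩ : polyAdjoin S z)) := by
    rintro ⟨x, g, hg, rfl⟩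
    exact ⟨⟨g, hg⟩, rfl⟩
  have := countable_poly S
  exact hsurj.countable

end CLaux

namespace CLaux

section Frac
variable {T : Type*} [CommRing T] [IsLocalRing T]

/-- The "localization at `S ∩ m`" of `S` inside `T`. -/
def fracSubring (S : Subring T) : Subring T where
  carrier := {x | ∃ b ∈ S, ∃ c ∈ S, c ∉ maximalIdeal T ∧ x * c = b}
  zero_mem' := ⟨0, S.zero_mem, 1, S.one_mem, by
    simp [Ideal.eq_top_iff_one, (maximalIdeal.isMaximal T).ne_top], by simp⟩
  one_mem' := ⟨1, S.one_mem, 1, S.one_mem, by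
    simp [Ideal.eq_top_iff_one, (maximalIdeal.isMaximal T).ne_top], by simp⟩
  add_mem' := by
    rintro x y ⟨b, hb, c, hc, hcm, hx⟩ ⟨b', hb', c', hc', hcm', hy⟩
    refine ⟨b * c' + b' * c, S.add_mem (S.mul_mem hb hc') (S.mul_mem hb' hc),
      c * c', S.mul_mem hc hc', ?_, ?_⟩
    · intro h
      rcases ((maximalIdeal.isMaximal T).isPrime.mem_or_mem h) with h | h
      exacts [hcm h, hcm' h]
    · calc (x + y) * (c * c') = (x * c) * c' + (y * c') * c := by ring
      _ = b * c' + b' * c := by rw [hx, hy]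
  mul_mem' := by
    rintro x y ⟨b, hb, c, hc, hcm, hx⟩ ⟨b', hb', c', hc', hcm', hy⟩
    refine ⟨b * b', S.mul_mem hb hb', c * c', S.mul_mem hc hc', ?_, ?_⟩
    · intro h
      rcases ((maximalIdeal.isMaximal T).isPrime.mem_or_mem h) with h | h
      exacts [hcm h, hcm' h]
    · calc (x * y) * (c * c') = (x * c) * (y * c') := by ring
      _ = b * b' := by rw [hx, hy]
  neg_mem' := by
    rintro x ⟨b, hb, c, hc, hcm, hx⟩
    exact ⟨-b, S.neg_mem hb, c, hc, hcm, by rw [neg_mul, hx]⟩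

theorem le_fracSubring (S : Subring T) : S ≤ fracSubring S :=
  fun s hs => ⟨s, hs, 1, S.one_mem, by
    simp [Ideal.eq_top_iff_one, (maximalIdeal.isMaximal T).ne_top], by simp⟩

theorem countable_fracSubring (S : Subring T) [Countable S] :
    Countable (fracSubring S) := by
  classical
  have hsub : (fracSubring S : Set T) ⊆
      Set.range (fun p : S × S =>
        if h : IsUnit (p.2 : T) then (p.1 : T) * (↑h.unit⁻¹ : T) else 0) := by
    rintro x ⟨b, hb, c, hc, hcm, hx⟩
    have hcu : IsUnit c := by
      by_contra h
      exact hcm ((IsLocalRing.mem_maximalIdeal c).mpr h)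
    refine ⟨(⟨b, hb⟩, ⟨c, hc⟩), ?_⟩
    simp only [dif_pos hcu]
    have hci : c * (↑hcu.unit⁻¹ : T) = 1 := hcu.mul_val_inv
    have := congrArg (fun t => t * (↑hcu.unit⁻¹ : T)) hx
    rw [← this, mul_assoc, hci, mul_one]
  have : (fracSubring S : Set T).Countable :=
    Set.Countable.mono hsub (Set.countable_range _)
  exact this.to_subtype

theorem inv_mem_fracSubring (S : Subring T) {x : T} (hx : x ∈ S) (hxm : x ∉ maximalIdeal T) :
    ∃ x' ∈ fracSubring S, x * x' = 1 := by
  have hxu : IsUnit x := by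
    by_contra h
    exact hxm ((IsLocalRing.mem_maximalIdeal x).mpr h)
  refine ⟨↑hxu.unit⁻¹, ⟨1, S.one_mem, x, hx, hxm, ?_⟩, hxu.mul_val_inv⟩
  rw [mul_comm]
  exact hxu.mul_val_inv

end Frac
end CLaux

namespace CLaux

theorem not_countable_funBool : ¬ (Set.univ : Set (ℕ → Bool)).Countable := by
  intro h
  have : Countable (ℕ → Bool) := Set.countable_univ_iff.mp h
  obtain ⟨f, hf⟩ := exists_surjective_nat (ℕ → Bool)
  obtain ⟨k, hk⟩ := hf (fun n => ! f n n)
  have := congrFun hk k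
  simp at this

variable {T : Type*} [CommRing T] [IsLocalRing T] [IsNoetherianRing T]
  [IsAdicComplete (IsLocalRing.maximalIdeal T) T]

open IsLocalRing Polynomial

/-- The key avoidance lemma: adjoining a suitable associate of `y` preserves goodness. -/
theorem exists_good_unit (P : Ideal T) (hP : P.IsPrime)
    (S : Subring T) (hSc : Countable S)
    (hgood : ∀ x : T, x ∈ S → x ≠ 0 → x ∉ P ∧ x ∈ nonZeroDivisors T)
    {y : T} (hym : y ∈ maximalIdeal T) (hyr : y ∈ nonZeroDivisors T) (hyP : y ∉ P) :
    ∃ z : T, (∃ t : Tˣ, z = y * t) ∧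
      ∀ x : T, x ∈ polyAdjoin S z → x ≠ 0 → x ∉ P ∧ x ∈ nonZeroDivisors T := by
  classical
  obtain ⟨𝒥₀, h𝒥₀fin, h𝒥₀prime, h𝒥₀zd, h𝒥₀cover⟩ := CLaux.exists_prime_cover T
  set 𝒥 : Set (Ideal T) := insert P 𝒥₀ with h𝒥
  have h𝒥prime : ∀ J ∈ 𝒥, J.IsPrime := by
    rintro J (rfl | hJ)
    · exact hP
    · exact h𝒥₀prime J hJ
  have h𝒥c : 𝒥.Countable := (h𝒥₀fin.countable).insert P
  have hy𝒥 : ∀ J ∈ 𝒥, y ∉ J := by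
    rintro J (rfl | hJ) h
    · exact hyP h
    · exact h𝒥₀zd J hJ y h hyr
  obtain ⟨u, hu1, hu2⟩ := CLaux.exists_unit_family hym
  have huu : ∀ a, IsUnit (u a) := by
    intro a
    by_contra h
    have hum : u a ∈ maximalIdeal T := (IsLocalRing.mem_maximalIdeal _).mpr h
    have : (1 : T) ∈ maximalIdeal T := by
      have := (maximalIdeal T).sub_mem hum (hu1 a)
      simpa using this
    exact (maximalIdeal.isMaximal T).ne_top ((Ideal.eq_top_iff_one _).mpr this)
  -- injectivity of residues
  have hinj : ∀ J ∈ 𝒥, Function.Injective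
      (fun a : ℕ → Bool => Ideal.Quotient.mk J (y * u a)) := by
    intro J hJ a b hab'
    have hab : Ideal.Quotient.mk J (y * u a) = Ideal.Quotient.mk J (y * u b) := hab'
    by_contra hne
    obtain ⟨n, w, hwm, hwe⟩ := hu2 a b hne
    have hmem : y * u a - y * u b ∈ J := by
      have : Ideal.Quotient.mk J (y * u a - y * u b) = 0 := by
        rw [map_sub, hab, sub_self]
      exact (Ideal.Quotient.eq_zero_iff_mem).mp this
    have hprod : y * (y ^ (n + 1) * w) ∈ J := by
      rw [← mul_sub, hwe] at hmem
      exact hmem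
    rcases (h𝒥prime J hJ).mem_or_mem hprod with h | h
    · exact hy𝒥 J hJ h
    rcases (h𝒥prime J hJ).mem_or_mem h with h | h
    · exact hy𝒥 J hJ ((h𝒥prime J hJ).mem_of_pow_mem _ h)
    · exact hwm (le_maximalIdeal (h𝒥prime J hJ).ne_top h)
  -- the bad set
  set Bad : Set (ℕ → Bool) :=
    ⋃ J ∈ 𝒥, ⋃ g ∈ {g : T[X] | ∀ n, g.coeff n ∈ S},
      {a | g ≠ 0 ∧ g.eval (y * u a) ∈ J} with hBad
  have hBadc : Bad.Countable := by
    refine Set.Countable.biUnion h𝒥c fun J hJ => ?_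
    refine Set.Countable.biUnion ?_ fun g hg => ?_
    · have hcp := countable_poly S
      refine Set.Countable.mono (fun g hg => ?_)
        (Set.countable_range (fun g : {g : T[X] // ∀ n, g.coeff n ∈ S} => g.1))
      exact ⟨⟨g, hg⟩, rfl⟩
    · by_cases hg0 : g = 0
      · simp [hg0]
      haveI := h𝒥prime J hJ
      haveI : IsDomain (T ⧸ J) := Ideal.Quotient.isDomain J
      have hmap0 : g.map (Ideal.Quotient.mk J) ≠ 0 := by
        obtain ⟨n, hn⟩ : ∃ n, g.coeff n ≠ 0 := by
          by_contra h
          push_neg at h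
          exact hg0 (Polynomial.ext fun n => by simp [h n])
        intro h
        have := congrArg (fun p => Polynomial.coeff p n) h
        simp only [Polynomial.coeff_map, Polynomial.coeff_zero] at this
        have hnJ : g.coeff n ∈ J := (Ideal.Quotient.eq_zero_iff_mem).mp this
        obtain ⟨hP', hreg⟩ := hgood _ (hg n) hn
        rcases hJ with rfl | hJ'
        · exact hP' hnJ
        · exact h𝒥₀zd J hJ' _ hnJ hreg
      have hfin : {x : T ⧸ J | (g.map (Ideal.Quotient.mk J)).IsRoot x}.Finite :=
        Polynomial.finite_setOf_isRoot hmap0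
      refine Set.Countable.mono ?_ ((hfin.preimage
        (Set.injOn_of_injective (hinj J hJ))).countable)
      rintro a ⟨-, ha⟩
      simp only [Set.mem_preimage, Set.mem_setOf_eq, Polynomial.IsRoot.def]
      rw [Polynomial.eval_map, Polynomial.eval₂_hom]
      exact (Ideal.Quotient.eq_zero_iff_mem).mpr ha
  -- choose a good sequence
  have hex : ∃ a : ℕ → Bool, a ∉ Bad := by
    by_contra h
    push_neg at h
    exact not_countable_funBool (Set.Countable.mono (fun a _ => h a) hBadc)
  obtain ⟨a, ha⟩ := hex
  refine ⟨y * u a, ⟨(huu a).unit, by rw [(huu a).unit_spec]⟩, ?_⟩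
  rintro x ⟨g, hg, rfl⟩ hx0
  have hnotJ : ∀ J ∈ 𝒥, g.eval (y * u a) ∉ J := by
    intro J hJ hmem
    apply ha
    rw [hBad]
    refine Set.mem_biUnion hJ ?_
    refine Set.mem_biUnion (show g ∈ {g : T[X] | ∀ n, g.coeff n ∈ S} from hg) ?_
    exact ⟨fun h => hx0 (by rw [h]; simp), hmem⟩
  constructor
  · exact hnotJ P (Set.mem_insert _ _)
  · by_contra h
    obtain ⟨J, hJ, hmem⟩ := h𝒥₀cover _ h
    exact hnotJ J (Set.mem_insert_of_mem _ hJ) hmem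

end CLaux

namespace CLaux

open IsLocalRing Polynomial

variable {T : Type*} [CommRing T] [IsLocalRing T] [IsNoetherianRing T]
  [IsAdicComplete (IsLocalRing.maximalIdeal T) T]

/-- Goodness of a subring: all nonzero elements avoid `P` and are regular. -/
def GoodSub (P : Ideal T) (S : Subring T) : Prop :=
  ∀ x : T, x ∈ S → x ≠ 0 → x ∉ P ∧ x ∈ nonZeroDivisors T

theorem step (P : Ideal T) (hP : P.IsPrime)
    (S : Subring T) (hSc : Countable S) (hgood : GoodSub P S)
    {y : T} (hym : y ∈ maximalIdeal T) (hyr : y ∈ nonZeroDivisors T) (hyP : y ∉ P) :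
    ∃ S' : Subring T, S ≤ S' ∧ Countable S' ∧ GoodSub P S' ∧
      (∃ t : Tˣ, y * ↑t ∈ S') ∧
      (∀ x ∈ S, x ∉ maximalIdeal T → ∃ x' ∈ S', x * x' = 1) := by
  obtain ⟨z, ⟨t, rfl⟩, hgood'⟩ := exists_good_unit P hP S hSc hgood hym hyr hyP
  haveI : Countable (polyAdjoin S (y * ↑t)) := countable_polyAdjoin S _
  refine ⟨fracSubring (polyAdjoin S (y * ↑t)),
    (le_polyAdjoin S _).trans (le_fracSubring _), countable_fracSubring _, ?_, ?_, ?_⟩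
  · -- goodness of the fraction ring
    rintro x ⟨b, hb, c, hc, hcm, hxc⟩ hx0
    have hcu : IsUnit c := by
      by_contra h
      exact hcm ((IsLocalRing.mem_maximalIdeal c).mpr h)
    have hb0 : b ≠ 0 := by
      rintro rfl
      apply hx0
      have := congrArg (fun w => w * (↑hcu.unit⁻¹ : T)) hxc
      simpa [mul_assoc, hcu.mul_val_inv] using this
    obtain ⟨hbP, hbreg⟩ := hgood' b hb hb0
    constructor
    · intro hxP
      exact hbP (hxc ▸ P.mul_mem_right c hxP)
    · rw [mem_nonZeroDivisors_iff_right]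
      intro v hv
      have : v * b = 0 := by
        rw [← hxc, ← mul_assoc, hv, zero_mul]
      exact (mem_nonZeroDivisors_iff_right.mp hbreg) v this
  · exact ⟨t, le_fracSubring _ (self_mem_polyAdjoin S _)⟩
  · intro x hx hxm
    exact inv_mem_fracSubring _ (le_polyAdjoin S _ hx) hxm

end CLaux


/-- There is a countably infinite `p`-subring of `T` containing associates
of countably many prescribed regular elements of `m \ p`. -/
theorem exists_countable_pSubring_with_associates
    (T : Type*) [CommRing T] [IsLocalRing T] [IsNoetherianRing T]
    [IsAdicComplete (maximalIdeal T) T]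
    (hreg : ∀ x ∈ (Int.castRingHom T).range, x ≠ 0 → x ∈ nonZeroDivisors T)
    (P : Ideal T) (hP : P.IsPrime) (hPm : P ≠ maximalIdeal T)
    (hPiP : ∀ x ∈ (Int.castRingHom T).range, x ∈ P → x = 0)
    (y : ℕ → T)
    (hy : ∀ i, y i ∈ nonZeroDivisors T ∧ y i ∈ maximalIdeal T ∧ y i ∉ P) :
    ∃ R : Subring T, IsPSubring T P R ∧ Countable R ∧ Infinite R ∧
      ∀ i, ∃ t : Tˣ, y i * (t : T) ∈ R := by
  classical
  -- base subring
  set R0 : Subring T := (Int.castRingHom T).range with hR0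
  have hc0 : Countable R0 := (Int.castRingHom T).rangeRestrict_surjective.countable
  have hg0 : CLaux.GoodSub P R0 := fun x hx hx0 =>
    ⟨fun hxP => hx0 (hPiP x hx hxP), hreg x hx hx0⟩
  -- step chaining
  have hstep : ∀ (S : Subring T), Countable S → CLaux.GoodSub P S → ∀ i : ℕ,
      ∃ S' : Subring T, S ≤ S' ∧ Countable S' ∧ CLaux.GoodSub P S' ∧
        (∃ t : Tˣ, y i * ↑t ∈ S') ∧
        (∀ x ∈ S, x ∉ maximalIdeal T → ∃ x' ∈ S', x * x' = 1) := fun S hc hg i =>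
    CLaux.step P hP S hc hg (hy i).2.1 (hy i).1 (hy i).2.2
  choose step' hs1 hs2 hs3 hs4 hs5 using hstep
  -- the recursive chain
  let Q : ℕ → {S : Subring T // Countable S ∧ CLaux.GoodSub P S} := fun n =>
    Nat.rec (motive := fun _ => {S : Subring T // Countable S ∧ CLaux.GoodSub P S})
      ⟨R0, hc0, hg0⟩
      (fun n prev => ⟨step' prev.1 prev.2.1 prev.2.2 n,
        hs2 prev.1 prev.2.1 prev.2.2 n, hs3 prev.1 prev.2.1 prev.2.2 n⟩) n
  have hQsucc : ∀ n : ℕ, (Q (n+1)).1 = step' (Q n).1 (Q n).2.1 (Q n).2.2 n := fun n => rfl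
  have hQle : ∀ n : ℕ, (Q n).1 ≤ (Q (n+1)).1 := fun n => by
    rw [hQsucc]
    exact hs1 (Q n).1 (Q n).2.1 (Q n).2.2 n
  have hmono : ∀ {i j : ℕ}, i ≤ j → (Q i).1 ≤ (Q j).1 := by
    intro i j hij
    induction j with
    | zero => simpa [Nat.le_zero.mp hij] using le_refl _
    | succ j ih =>
      rcases Nat.lt_or_ge i (j+1) with h | h
      · exact (ih (by omega)).trans (hQle j)
      · have : i = j + 1 := by omega
        simp [this]
  have hdir : Directed (· ≤ ·) (fun n => (Q n).1) := fun i j =>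
    ⟨max i j, hmono (le_max_left i j), hmono (le_max_right i j)⟩
  set R : Subring T := ⨆ n, (Q n).1 with hRdef
  have hmem : ∀ x : T, x ∈ R ↔ ∃ n, x ∈ (Q n).1 := fun x =>
    Subring.mem_iSup_of_directed hdir
  have hle : ∀ n, (Q n).1 ≤ R := fun n => le_iSup (fun n => (Q n).1) n
  -- good
  have hgoodR : CLaux.GoodSub P R := by
    intro x hx hx0
    obtain ⟨n, hn⟩ := (hmem x).mp hx
    exact (Q n).2.2 x hn hx0
  -- countable
  have hcR : Countable R := by
    have : (R : Set T).Countable := by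
      rw [hRdef, Subring.coe_iSup_of_directed hdir]
      exact Set.countable_iUnion fun n => Set.countable_coe_iff.mpr (Q n).2.1
    exact this.to_subtype
  -- inverses
  have hinv : ∀ x : T, x ∈ R → x ∉ maximalIdeal T → ∃ x' , x' ∈ R ∧ x * x' = 1 := by
    intro x hx hxm
    obtain ⟨n, hn⟩ := (hmem x).mp hx
    obtain ⟨x', hx', hxx'⟩ := hs5 (Q n).1 (Q n).2.1 (Q n).2.2 n x hn hxm
    rw [← hQsucc n] at hx'
    exact ⟨x', hle (n+1) hx', hxx'⟩
  -- units of the subring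
  have hunit : ∀ a : R, (a : T) ∉ maximalIdeal T → IsUnit a := by
    rintro ⟨x, hx⟩ hxm
    obtain ⟨x', hx', hxx'⟩ := hinv x hx hxm
    exact IsUnit.of_mul_eq_one (⟨x', hx'⟩ : R) (Subtype.ext (by push_cast; exact hxx'))
  have hnonunit : ∀ a : R, a ∈ nonunits R → (a : T) ∈ maximalIdeal T := by
    intro a ha
    by_contra h
    exact (mem_nonunits_iff.mp ha) (hunit a h)
  haveI : Nontrivial R := ⟨⟨0, 1, fun h => zero_ne_one (α := T) (by
    simpa [Subtype.ext_iff] using h)⟩⟩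
  haveI hlocR : IsLocalRing R := by
    refine IsLocalRing.of_nonunits_add ?_
    intro a b ha hb
    rw [mem_nonunits_iff]
    intro hab
    have habm : ((a + b : R) : T) ∈ maximalIdeal T := by
      push_cast
      exact (maximalIdeal T).add_mem (hnonunit a ha) (hnonunit b hb)
    have : IsUnit ((a + b : R) : T) := hab.map R.subtype
    exact (maximalIdeal.isMaximal T).ne_top (Ideal.eq_top_of_isUnit_mem _ habm this)
  -- the maximal ideal of R is the contraction
  have hmaxR : (Ideal.comap R.subtype (maximalIdeal T)).IsMaximal := by
    rw [Ideal.isMaximal_iff]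
    constructor
    · intro h
      have : (1 : T) ∈ maximalIdeal T := h
      exact (maximalIdeal.isMaximal T).ne_top ((Ideal.eq_top_iff_one _).mpr this)
    · intro J x hIJ hxI hxJ
      have hxm : (x : T) ∉ maximalIdeal T := hxI
      obtain ⟨x', hx', hxx'⟩ := hinv x x.2 hxm
      have : x * (⟨x', hx'⟩ : R) = 1 := Subtype.ext (by push_cast; exact hxx')
      rw [← this]
      exact J.mul_mem_right _ hxJ
  -- contraction of P is trivial
  have hPbot : Ideal.comap R.subtype P = ⊥ := by
    rw [eq_bot_iff]
    intro x hx
    rw [Ideal.mem_comap] at hx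
    rw [Ideal.mem_bot]
    by_contra h
    have hx0 : (x : T) ≠ 0 := fun hc => h (Subtype.ext hc)
    exact (hgoodR x x.2 hx0).1 hx
  -- contraction of associated primes is trivial
  have hQbot : ∀ Qa ∈ associatedPrimes T T, Ideal.comap R.subtype Qa = ⊥ := by
    rintro Qa ⟨hQp, v, hv⟩
    rw [eq_bot_iff]
    intro x hx
    rw [Ideal.mem_comap] at hx
    rw [Ideal.mem_bot]
    by_contra h
    have hx0 : (x : T) ≠ 0 := fun hc => h (Subtype.ext hc)
    have hv0 : v ≠ 0 := by
      rintro rfl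
      apply hQp.ne_top
      rw [hv]
      rw [Ideal.radical_eq_top, Ideal.eq_top_iff_one, Submodule.mem_colon]
      simp
    obtain ⟨n, hxv⟩ : ∃ n, (x : T) ^ n * v = 0 := by
      rw [hv] at hx
      obtain ⟨n, hn⟩ := Ideal.mem_radical_iff.mp hx
      exact ⟨n, by simpa [Submodule.mem_colon, smul_eq_mul] using hn⟩
    have := (mem_nonZeroDivisors_iff_right.mp (pow_mem (hgoodR x x.2 hx0).2 n)) v (by rw [mul_comm] at hxv; exact hxv)
    exact hv0 this
  -- associates
  have hassoc : ∀ i, ∃ t : Tˣ, y i * (t : T) ∈ R := by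
    intro i
    obtain ⟨t, ht⟩ := hs4 (Q i).1 (Q i).2.1 (Q i).2.2 i
    rw [← hQsucc i] at ht
    exact ⟨t, hle (i+1) ht⟩
  -- infinite
  haveI : Infinite R := by
    obtain ⟨t0, ht0⟩ := hassoc 0
    set z : T := y 0 * ↑t0 with hz
    have hzR : z ∈ R := ht0
    have hzm : z ∈ maximalIdeal T := (maximalIdeal T).mul_mem_right _ (hy 0).2.1
    have hzreg : z ∈ nonZeroDivisors T := mul_mem (hy 0).1 (t0.isUnit.mem_nonZeroDivisors)
    have hpow : ∀ k l : ℕ, k < l → z ^ k ≠ z ^ l := by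
      intro k l hkl he
      have h1 : (1 - z ^ (l - k)) * z ^ k = 0 := by
        have : z ^ l = z ^ (l - k) * z ^ k := by
          rw [← pow_add]
          congr 1
          omega
        rw [sub_mul, one_mul, ← this, he, sub_self]
      have h2 : (1 : T) - z ^ (l - k) = 0 :=
        (mem_nonZeroDivisors_iff_right.mp (pow_mem hzreg k)) _ h1
      have h3 : (1 : T) ∈ maximalIdeal T := by
        have : (1 : T) = z ^ (l - k) := by linear_combination h2
        rw [this]
        exact Ideal.pow_mem_of_mem _ hzm _ (by omega)
      exact (maximalIdeal.isMaximal T).ne_top ((Ideal.eq_top_iff_one _).mpr h3)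
    refine Infinite.of_injective (fun k : ℕ => (⟨z ^ k, pow_mem hzR k⟩ : R)) ?_
    intro k l hkl
    simp only [Subtype.ext_iff] at hkl
    by_contra h
    rcases Nat.lt_or_ge k l with h' | h'
    · exact hpow k l h' hkl
    · exact hpow l k (by omega) hkl.symm
  -- cardinality conditions
  have hcard : Cardinal.mk R ≤ max Cardinal.aleph0 (Cardinal.mk (ResidueField T)) ∧
      (Cardinal.mk R = max Cardinal.aleph0 (Cardinal.mk (ResidueField T)) →
        Cardinal.mk (ResidueField T) ≤ Cardinal.aleph0) := by
    constructor
    · exact le_trans Cardinal.mk_le_aleph0 (le_max_left _ _)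
    · intro h
      calc Cardinal.mk (ResidueField T) ≤ max Cardinal.aleph0 (Cardinal.mk (ResidueField T)) :=
            le_max_right _ _
        _ = Cardinal.mk R := h.symm
        _ ≤ Cardinal.aleph0 := Cardinal.mk_le_aleph0
  exact ⟨R, ⟨hlocR, hmaxR, hcard, hPbot, hQbot⟩, hcR, inferInstance, hassoc⟩
end

section
/- Let (T,m) be a complete local ring with m ∉ Ass(T) and let p be a nonmaximal prime ideal of T. Let (R, R∩m) be an infinite p-subring of T and let u ∈ T. Then there exists a p-subring (S, S∩m) of T such that R ⊆ S ⊆ T, the coset u + m² lies in the image of the map S → T/m², and |S| = |R|. -/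
open IsLocalRing

section AuxDevelopment

set_option linter.unusedSectionVars false
set_option linter.unusedVariables false

open IsLocalRing Submodule Polynomial

section Part0

variable {R : Type*} [CommRing R] {M : Type*} [AddCommGroup M] [Module R M]

theorem ass_subset_union (N : Submodule R M) :
    associatedPrimes R M ⊆ associatedPrimes R N ∪ associatedPrimes R (M ⧸ N) := by
  exact associatedPrimes.subset_union_of_exact N.injective_subtype (LinearMap.exact_subtype_mkQ N)

theorem associatedPrimes_finite (R M : Type*) [CommRing R] [IsNoetherianRing R] [AddCommGroup M]
    [Module R M] [Module.Finite R M] : (associatedPrimes R M).Finite := by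
  exact associatedPrimes.finite (A := R) (M := M)

end Part0

section Part1

variable {T : Type*} [CommRing T] [IsLocalRing T] [IsNoetherianRing T]

/-- Krull: every ideal is closed in the `m`-adic topology. -/
theorem mem_of_forall_mem_sup_pow (q : Ideal T) (x : T)
    (h : ∀ n : ℕ, x ∈ q ⊔ maximalIdeal T ^ n) : x ∈ q := by
  have hbot := Ideal.iInf_pow_smul_eq_bot_of_isLocalRing (R := T) (M := T ⧸ q)
    (I := maximalIdeal T) (Ideal.IsMaximal.ne_top (maximalIdeal.isMaximal T))
  have hx : Submodule.Quotient.mk (p := q) x ∈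
      (⨅ i : ℕ, (maximalIdeal T ^ i • ⊤ : Submodule T (T ⧸ q))) := by
    rw [Submodule.mem_iInf]
    intro n
    obtain ⟨a, ha, b, hb, rfl⟩ := Submodule.mem_sup.mp (h n)
    have : Submodule.Quotient.mk (p := q) (a + b) = b • Submodule.Quotient.mk (p := q) 1 := by
      rw [← Submodule.Quotient.mk_smul]
      rw [Submodule.Quotient.eq]
      simpa using ha
    rw [this]
    exact Submodule.smul_mem_smul hb trivial
  rw [hbot] at hx
  rwa [Submodule.mem_bot, Submodule.Quotient.mk_eq_zero] at hx

theorem exists_notMem_sup_pow {q : Ideal T} {x : T} (h : x ∉ q) :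
    ∃ n : ℕ, x ∉ q ⊔ maximalIdeal T ^ n := by
  by_contra hc
  push_neg at hc
  exact h (mem_of_forall_mem_sup_pow q x hc)

theorem pow_not_le_of_prime {q : Ideal T} (hq : q.IsPrime) (hqm : q ≠ maximalIdeal T) (n : ℕ)
    (hn : n ≠ 0) : ¬ (maximalIdeal T ^ n ≤ q) := by
  intro hle
  have : maximalIdeal T ≤ q := Ideal.IsPrime.le_of_pow_le hle
  exact hqm ((maximalIdeal.isMaximal T).eq_of_le hq.ne_top this).symm

/-- `m^n ⊄ q + m^{n+1}` for a nonmaximal prime `q`. -/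
theorem pow_not_le_sup_succ {q : Ideal T} (hq : q.IsPrime) (hqm : q ≠ maximalIdeal T) (n : ℕ)
    (hn : n ≠ 0) : ¬ (maximalIdeal T ^ n ≤ q ⊔ maximalIdeal T ^ (n + 1)) := by
  intro hle
  have step : ∀ j : ℕ, maximalIdeal T ^ n ≤ q ⊔ maximalIdeal T ^ (n + j) := by
    intro j
    induction j with
    | zero => simp
    | succ j ih =>
      have h2 : maximalIdeal T ^ (n + j) ≤ q ⊔ maximalIdeal T ^ (n + j + 1) := by
        have : maximalIdeal T ^ (n + j) = maximalIdeal T ^ j * maximalIdeal T ^ n := by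
          rw [← pow_add, add_comm]
        rw [this]
        calc maximalIdeal T ^ j * maximalIdeal T ^ n
            ≤ maximalIdeal T ^ j * (q ⊔ maximalIdeal T ^ (n + 1)) :=
              Ideal.mul_mono_right hle
          _ ≤ q ⊔ maximalIdeal T ^ (n + j + 1) := by
              rw [Ideal.mul_sup]
              apply sup_le
              · exact le_trans Ideal.mul_le_right le_sup_left
              · rw [← pow_add]
                have : j + (n + 1) = n + j + 1 := by ring
                rw [this]
                exact le_sup_right
      exact le_trans ih (sup_le le_sup_left h2)
  -- hence m^n ≤ q, contradiction
  have : maximalIdeal T ^ n ≤ q := by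
    intro x hx
    apply mem_of_forall_mem_sup_pow
    intro j
    rcases le_or_gt j n with hj | hj
    · exact Submodule.mem_sup_right (Ideal.pow_le_pow_right hj hx)
    · have := step (j - n) hx
      have hnj : n + (j - n) = j := by omega
      rw [hnj] at this
      exact this
  exact pow_not_le_of_prime hq hqm n hn this

end Part1

section P2

variable {T : Type*} [CommRing T] [IsLocalRing T] [IsNoetherianRing T] (R : Subring T)

/-- the set of "bad residues" mod `q`: roots of nonzero polynomials over `R`. -/
def badSet (q : Ideal T) : Set (T ⧸ q) :=
  {z | ∃ f : Polynomial ↥R, f ≠ 0 ∧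
    Polynomial.eval₂ ((Ideal.Quotient.mk q).comp R.subtype) z f = 0}

theorem psi_injective {q : Ideal T} (hcomap : Ideal.comap R.subtype q = ⊥) :
    Function.Injective ((Ideal.Quotient.mk q).comp R.subtype) := by
  rw [injective_iff_map_eq_zero]
  intro a ha
  have : (a : T) ∈ q := by
    rwa [RingHom.comp_apply, Ideal.Quotient.eq_zero_iff_mem] at ha
  have : a ∈ Ideal.comap R.subtype q := this
  rw [hcomap] at this
  simpa using this

theorem badSet_subset (q : Ideal T) :
    badSet R q ⊆ ⋃ f : {f : Polynomial ↥R // f ≠ 0},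
      {z : T ⧸ q | ((f : Polynomial ↥R).map ((Ideal.Quotient.mk q).comp R.subtype)).IsRoot z} := by
  rintro z ⟨f, hf, hz⟩
  refine Set.mem_iUnion.mpr ⟨⟨f, hf⟩, ?_⟩
  simp only [Set.mem_setOf_eq, IsRoot.def, eval_map]
  exact hz

theorem badSet_card_le {q : Ideal T} (hq : q.IsPrime) (hcomap : Ideal.comap R.subtype q = ⊥)
    [Infinite ↥R] : Cardinal.mk (badSet R q) ≤ Cardinal.mk ↥R := by
  haveI := hq
  calc Cardinal.mk (badSet R q)
      ≤ Cardinal.mk (⋃ f : {f : Polynomial ↥R // f ≠ 0},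
        {z : T ⧸ q | ((f : Polynomial ↥R).map ((Ideal.Quotient.mk q).comp R.subtype)).IsRoot z}) :=
        Cardinal.mk_le_mk_of_subset (badSet_subset R q)
    _ ≤ Cardinal.mk {f : Polynomial ↥R // f ≠ 0} * ⨆ f : {f : Polynomial ↥R // f ≠ 0},
        Cardinal.mk {z : T ⧸ q |
          ((f : Polynomial ↥R).map ((Ideal.Quotient.mk q).comp R.subtype)).IsRoot z} :=
        Cardinal.mk_iUnion_le _
    _ ≤ Cardinal.mk ↥R * Cardinal.aleph0 := by
        apply mul_le_mul'
        · calc Cardinal.mk {f : Polynomial ↥R // f ≠ 0} ≤ Cardinal.mk (Polynomial ↥R) :=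
            Cardinal.mk_subtype_le _
          _ = max (Cardinal.mk ↥R) Cardinal.aleph0 := Polynomial.cardinalMk_eq_max
          _ = Cardinal.mk ↥R := max_eq_left (Cardinal.aleph0_le_mk ↥R)
        · apply ciSup_le'
          intro f
          apply le_of_lt
          apply Set.Finite.lt_aleph0
          apply Polynomial.finite_setOf_isRoot
          rw [Polynomial.map_ne_zero_iff (psi_injective R hcomap)]
          exact f.2
    _ = Cardinal.mk ↥R := by
        rw [Cardinal.mul_aleph0_eq (Cardinal.aleph0_le_mk ↥R)]

theorem eval_notMem_of_notMem_badSet {q : Ideal T} {x : T}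
    (hx : (Ideal.Quotient.mk q) x ∉ badSet R q) {f : Polynomial ↥R} (hf : f ≠ 0) :
    Polynomial.eval₂ R.subtype x f ∉ q := by
  intro hmem
  apply hx
  refine ⟨f, hf, ?_⟩
  rw [← Polynomial.hom_eval₂]
  rwa [Ideal.Quotient.eq_zero_iff_mem]

/-- Case 2 step: refine the coset to be entirely good for one prime `q`. -/
theorem case2_step [Infinite ↥R]
    (hcard : Cardinal.mk ↥R < Cardinal.mk (ResidueField T))
    {q : Ideal T} (hq : q.IsPrime) (hqm : q ≠ maximalIdeal T)
    (hcomap : Ideal.comap R.subtype q = ⊥) (v : T) (n : ℕ) (hn : n ≠ 0) :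
    ∃ b ∈ maximalIdeal T ^ n, ∀ c ∈ maximalIdeal T ^ (n + 1), ∀ f : Polynomial ↥R, f ≠ 0 →
      Polynomial.eval₂ R.subtype (v + b + c) f ∉ q := by
  classical
  obtain ⟨a, han, hanot⟩ := SetLike.not_le_iff_exists.mp (pow_not_le_sup_succ hq hqm n hn)
  set ρ : ResidueField T → T := Function.surjInv Ideal.Quotient.mk_surjective with hρ
  have hρ_res : ∀ lam : ResidueField T, Ideal.Quotient.mk (maximalIdeal T) (ρ lam) = lam :=
    fun lam => Function.surjInv_eq _ lam
  set G : Ideal (T ⧸ q) := (maximalIdeal T ^ (n + 1)).map (Ideal.Quotient.mk q) with hG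
  set Λ : Set (ResidueField T) :=
    {lam | ∃ z ∈ badSet R q, z - Ideal.Quotient.mk q (v + ρ lam * a) ∈ G} with hΛ
  have hΛcard : Cardinal.mk Λ ≤ Cardinal.mk (badSet R q) := by
    have : ∀ lam : Λ, ∃ z : badSet R q,
        (z : T ⧸ q) - Ideal.Quotient.mk q (v + ρ (lam : ResidueField T) * a) ∈ G := by
      rintro ⟨lam, z, hz1, hz2⟩
      exact ⟨⟨z, hz1⟩, hz2⟩
    choose Fc hFc using this
    apply Cardinal.mk_le_of_injective (f := Fc)
    rintro lam mu hlm
    have h1 := hFc lam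
    have h2 := hFc mu
    rw [hlm] at h1
    have hdiff : Ideal.Quotient.mk q ((ρ (mu : ResidueField T) - ρ (lam : ResidueField T)) * a)
        ∈ G := by
      have := G.sub_mem h1 h2
      have e : (((Fc mu) : T ⧸ q) - Ideal.Quotient.mk q (v + ρ (lam : ResidueField T) * a)) -
          (((Fc mu) : T ⧸ q) - Ideal.Quotient.mk q (v + ρ (mu : ResidueField T) * a)) =
          Ideal.Quotient.mk q ((ρ (mu : ResidueField T) - ρ (lam : ResidueField T)) * a) := by
        rw [sub_sub_sub_cancel_left, ← map_sub]
        congr 1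
        ring
      rwa [e] at this
    -- pull back membership
    obtain ⟨w, hw, hweq⟩ := Ideal.mem_map_iff_of_surjective (Ideal.Quotient.mk q)
      Ideal.Quotient.mk_surjective |>.mp hdiff
    have hsub : (ρ (mu : ResidueField T) - ρ (lam : ResidueField T)) * a ∈
        q ⊔ maximalIdeal T ^ (n + 1) := by
      have : (ρ (mu : ResidueField T) - ρ (lam : ResidueField T)) * a - w ∈ q := by
        rw [← Ideal.Quotient.eq_zero_iff_mem, map_sub, hweq, sub_self]
      have h3 : (ρ (mu : ResidueField T) - ρ (lam : ResidueField T)) * a =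
          ((ρ (mu : ResidueField T) - ρ (lam : ResidueField T)) * a - w) + w := by ring
      rw [h3]
      exact Submodule.add_mem_sup this hw
    by_contra hne
    have hunit : IsUnit (ρ (mu : ResidueField T) - ρ (lam : ResidueField T)) := by
      by_contra hnu
      have : ρ (mu : ResidueField T) - ρ (lam : ResidueField T) ∈ maximalIdeal T :=
        (IsLocalRing.mem_maximalIdeal _).mpr hnu
      have : Ideal.Quotient.mk (maximalIdeal T)
          (ρ (mu : ResidueField T) - ρ (lam : ResidueField T)) = 0 :=
        Ideal.Quotient.eq_zero_iff_mem.mpr this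
      rw [map_sub, hρ_res, hρ_res] at this
      apply hne
      apply Subtype.ext
      have := sub_eq_zero.mp this
      exact this.symm
    rw [Ideal.unit_mul_mem_iff_mem _ hunit] at hsub
    exact hanot hsub
  have hΛne : Λ ≠ Set.univ := by
    intro huniv
    have : Cardinal.mk (ResidueField T) ≤ Cardinal.mk (badSet R q) := by
      calc Cardinal.mk (ResidueField T) = Cardinal.mk Λ := by rw [huniv]; simp
        _ ≤ _ := hΛcard
    exact absurd (lt_of_lt_of_le hcard (this.trans (badSet_card_le R hq hcomap))) (lt_irrefl _)
  obtain ⟨lam, hlam⟩ : ∃ lam, lam ∉ Λ := by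
    by_contra hc
    push_neg at hc
    exact hΛne (Set.eq_univ_of_forall hc)
  refine ⟨ρ lam * a, Ideal.mul_mem_left _ _ han, ?_⟩
  intro c hc f hf heval
  apply hlam
  refine ⟨Ideal.Quotient.mk q (v + ρ lam * a + c), ?_, ?_⟩
  · refine ⟨f, hf, ?_⟩
    rw [← Polynomial.hom_eval₂]
    rwa [Ideal.Quotient.eq_zero_iff_mem]
  · have : Ideal.Quotient.mk q (v + ρ lam * a + c) - Ideal.Quotient.mk q (v + ρ lam * a) =
        Ideal.Quotient.mk q c := by
      rw [← map_sub]
      congr 1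
      ring
    rw [this]
    exact Ideal.mem_map_of_mem _ hc


/-- Case 2: iterate `case2_step` over a list of primes. -/
theorem case2_all [Infinite ↥R]
    (hcard : Cardinal.mk ↥R < Cardinal.mk (ResidueField T))
    (L : List (Ideal T))
    (hL : ∀ q ∈ L, q.IsPrime ∧ q ≠ maximalIdeal T ∧ Ideal.comap R.subtype q = ⊥) :
    ∀ (v : T) (n : ℕ), n ≠ 0 → ∃ d ∈ maximalIdeal T ^ n,
      ∀ c ∈ maximalIdeal T ^ (n + L.length), ∀ q ∈ L, ∀ f : Polynomial ↥R, f ≠ 0 →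
        Polynomial.eval₂ R.subtype (v + d + c) f ∉ q := by
  induction L with
  | nil =>
    intro v n hn
    exact ⟨0, Ideal.zero_mem _, fun c hc q hq => absurd hq List.not_mem_nil⟩
  | cons q L ih =>
    intro v n hn
    obtain ⟨hq, hqm, hqc⟩ := hL q List.mem_cons_self
    obtain ⟨b, hb, hbgood⟩ := case2_step R hcard hq hqm hqc v n hn
    obtain ⟨d', hd', hd'good⟩ := ih (fun q' hq' => hL q' (List.mem_cons_of_mem _ hq'))
      (v + b) (n + 1) (by omega)
    refine ⟨b + d', ?_, ?_⟩
    · exact Ideal.add_mem _ hb (Ideal.pow_le_pow_right (by omega) hd')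
    · intro c hc q' hq' f hf
      have hlen : n + (q :: L).length = (n + 1) + L.length := by
        simp [List.length_cons]; omega
      rw [hlen] at hc
      rcases List.mem_cons.mp hq' with rfl | hmem
      · have h1 : d' + c ∈ maximalIdeal T ^ (n + 1) :=
          Ideal.add_mem _ hd' (Ideal.pow_le_pow_right (by omega) hc)
        have := hbgood (d' + c) h1 f hf
        have e : v + b + (d' + c) = v + (b + d') + c := by ring
        rwa [e] at this
      · have := hd'good c hc q' hmem f hf
        have e : v + b + d' + c = v + (b + d') + c := by ring
        rwa [e] at this

theorem quotient_infinite {q : Ideal T} (hq : q.IsPrime) (hqm : q ≠ maximalIdeal T) :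
    Infinite (T ⧸ q) := by
  by_contra hfin
  rw [not_infinite_iff_finite] at hfin
  haveI := hfin
  haveI := Ideal.Quotient.isDomain q
  have hfield := Finite.isField_of_domain (T ⧸ q)
  -- get a ∈ m \ q
  have hqlem : q ≤ maximalIdeal T := IsLocalRing.le_maximalIdeal hq.ne_top
  have : ¬ (maximalIdeal T ≤ q) := fun hle => hqm (le_antisymm hqlem hle)
  obtain ⟨a, ham, haq⟩ := SetLike.not_le_iff_exists.mp this
  have hane : Ideal.Quotient.mk q a ≠ 0 := fun h => haq (Ideal.Quotient.eq_zero_iff_mem.mp h)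
  obtain ⟨b, hb⟩ := hfield.mul_inv_cancel hane
  obtain ⟨b', rfl⟩ := Ideal.Quotient.mk_surjective b
  have : a * b' - 1 ∈ q := by
    rw [← Ideal.Quotient.eq_zero_iff_mem, map_sub, map_mul, map_one, hb, sub_self]
  have h1 : (1 : T) ∈ maximalIdeal T := by
    have h2 : a * b' ∈ maximalIdeal T := (maximalIdeal T).mul_mem_right b' ham
    have h3 : a * b' - 1 ∈ maximalIdeal T := hqlem this
    have : (1 : T) = a * b' - (a * b' - 1) := by ring
    rw [this]
    exact Ideal.sub_mem _ h2 h3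
  exact (maximalIdeal.isMaximal T).ne_top (Ideal.eq_top_of_isUnit_mem _ h1 isUnit_one)

/-- Case 1 step: find a perturbation making one polynomial value avoid `q`, robustly. -/
theorem case1_step {q : Ideal T} (hq : q.IsPrime) (hqm : q ≠ maximalIdeal T)
    {g : Polynomial T} (hg : g.map (Ideal.Quotient.mk q) ≠ 0) (v : T) (e : ℕ) (he : e ≠ 0) :
    ∃ δ ∈ maximalIdeal T ^ e, ∃ e' : ℕ, e < e' ∧
      g.eval (v + δ) ∉ q ⊔ maximalIdeal T ^ e' := by
  haveI := Ideal.Quotient.isDomain q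
  haveI := quotient_infinite hq hqm
  have hδ : ∃ δ ∈ maximalIdeal T ^ e, g.eval (v + δ) ∉ q := by
    by_contra hc
    push_neg at hc
    -- all residues in the coset are roots of the reduction of g
    obtain ⟨a, hae, haq⟩ := SetLike.not_le_iff_exists.mp (pow_not_le_of_prime hq hqm e he)
    have hane : Ideal.Quotient.mk q a ≠ 0 := fun h => haq (Ideal.Quotient.eq_zero_iff_mem.mp h)
    have hinj : Function.Injective
        (fun z : T ⧸ q => Ideal.Quotient.mk q v + Ideal.Quotient.mk q a * z) := by
      intro z1 z2 h12
      simp only [add_right_inj] at h12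
      exact mul_left_cancel₀ hane h12
    have hmem : ∀ z : T ⧸ q, (Ideal.Quotient.mk q v + Ideal.Quotient.mk q a * z) ∈
        {z : T ⧸ q | (g.map (Ideal.Quotient.mk q)).IsRoot z} := by
      intro z
      obtain ⟨c, rfl⟩ := Ideal.Quotient.mk_surjective z
      have hac : a * c ∈ maximalIdeal T ^ e := Ideal.mul_mem_right c _ hae
      have : Ideal.Quotient.mk q v + Ideal.Quotient.mk q a * Ideal.Quotient.mk q c =
          Ideal.Quotient.mk q (v + a * c) := by rw [map_add, map_mul]
      rw [this]
      show (g.map (Ideal.Quotient.mk q)).eval _ = 0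
      rw [Polynomial.eval_map, Polynomial.eval₂_at_apply, Ideal.Quotient.eq_zero_iff_mem]
      exact hc (a * c) hac
    have hinf : {z : T ⧸ q | (g.map (Ideal.Quotient.mk q)).IsRoot z}.Infinite :=
      Set.infinite_of_injective_forall_mem hinj hmem
    exact hinf (Polynomial.finite_setOf_isRoot hg)
  obtain ⟨δ, hδm, hδq⟩ := hδ
  obtain ⟨k, hk⟩ := exists_notMem_sup_pow hδq
  refine ⟨δ, hδm, max (e + 1) k, by omega, fun hmem => hk ?_⟩
  rcases Submodule.mem_sup.mp hmem with ⟨x, hx, y, hy, hxy⟩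
  exact hxy ▸ Submodule.add_mem_sup hx (Ideal.pow_le_pow_right (le_max_right _ _) hy)

end P2

section Case1

variable {T : Type*} [CommRing T] [IsLocalRing T] [IsNoetherianRing T]
  [IsAdicComplete (maximalIdeal T) T] (R : Subring T)

theorem case1_all [Infinite ↥R] (hcnt : Countable ↥R)
    (C : Set (Ideal T)) (hCfin : C.Finite) (hCne : C.Nonempty)
    (hC : ∀ q ∈ C, q.IsPrime ∧ q ≠ maximalIdeal T ∧ Ideal.comap R.subtype q = ⊥)
    (u : T) :
    ∃ t ∈ maximalIdeal T ^ 2, ∀ q ∈ C, ∀ f : Polynomial ↥R, f ≠ 0 →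
      Polynomial.eval₂ R.subtype (u + t) f ∉ q := by
  classical
  haveI := hCfin.to_subtype
  haveI : Countable (Polynomial ↥R) := by
    rw [← Cardinal.mk_le_aleph0_iff]
    rw [Polynomial.cardinalMk_eq_max]
    exact max_le (Cardinal.mk_le_aleph0_iff.mpr hcnt) le_rfl
  haveI : Nonempty (↥C × Polynomial ↥R) := ⟨⟨⟨hCne.choose, hCne.choose_spec⟩, 0⟩⟩
  obtain ⟨E, hE⟩ := exists_surjective_nat (↥C × Polynomial ↥R)
  set M := maximalIdeal T with hM
  let Q : ℕ → Ideal T := fun j => ((E j).1 : Ideal T)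
  let F : ℕ → Polynomial ↥R := fun j => (E j).2
  let g : ℕ → Polynomial T := fun j => (F j).map R.subtype
  have hQ : ∀ j, (Q j).IsPrime ∧ Q j ≠ maximalIdeal T ∧ Ideal.comap R.subtype (Q j) = ⊥ :=
    fun j => hC _ (E j).1.2
  have hgnz : ∀ j, F j ≠ 0 → (g j).map (Ideal.Quotient.mk (Q j)) ≠ 0 := by
    intro j hFj
    show ((F j).map R.subtype).map (Ideal.Quotient.mk (Q j)) ≠ 0
    rw [Polynomial.map_map]
    rw [Polynomial.map_ne_zero_iff (psi_injective R (hQ j).2.2)]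
    exact hFj
  -- the step
  have step : ∀ (j : ℕ) (s : {p : T × ℕ // p.1 ∈ M ^ 2 ∧ 2 ≤ p.2}),
      ∃ s' : {p : T × ℕ // p.1 ∈ M ^ 2 ∧ 2 ≤ p.2},
        s'.1.1 - s.1.1 ∈ M ^ s.1.2 ∧ s.1.2 < s'.1.2 ∧
        (F j ≠ 0 → Polynomial.eval (u + s'.1.1) (g j) ∉ Q j ⊔ M ^ s'.1.2) := by
    rintro j ⟨⟨t, e⟩, ht, he⟩
    by_cases hFj : F j = 0
    · exact ⟨⟨⟨t, e + 1⟩, ht, by omega⟩, by simp, Nat.lt_succ_self e, fun h => absurd hFj h⟩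
    · obtain ⟨δ, hδm, e', he', hgood⟩ := case1_step (hQ j).1 (hQ j).2.1 (hgnz j hFj)
        (u + t) e (by omega)
      refine ⟨⟨⟨t + δ, e'⟩, ?_, by omega⟩, by simpa using hδm, he', fun _ => ?_⟩
      · exact Ideal.add_mem _ ht (Ideal.pow_le_pow_right (by omega) hδm)
      · have : u + (t + δ) = u + t + δ := by ring
        rwa [this]
  let Seq : ℕ → {p : T × ℕ // p.1 ∈ M ^ 2 ∧ 2 ≤ p.2} := fun j =>
    Nat.rec ⟨(0, 2), Ideal.zero_mem _, le_refl 2⟩ (fun j s => (step j s).choose) j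
  have hSeq : ∀ j, (Seq (j + 1)).1.1 - (Seq j).1.1 ∈ M ^ (Seq j).1.2 ∧
      (Seq j).1.2 < (Seq (j + 1)).1.2 ∧
      (F j ≠ 0 → Polynomial.eval (u + (Seq (j + 1)).1.1) (g j) ∉ Q j ⊔ M ^ (Seq (j + 1)).1.2) :=
    fun j => (step j (Seq j)).choose_spec
  let ts : ℕ → T := fun j => (Seq j).1.1
  let es : ℕ → ℕ := fun j => (Seq j).1.2
  have hts2 : ∀ j, ts j ∈ M ^ 2 := fun j => (Seq j).2.1
  have hes_mono : Monotone es := monotone_nat_of_le_succ (fun j => le_of_lt (hSeq j).2.1)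
  have hes_ge : ∀ j, j + 2 ≤ es j := by
    intro j
    induction j with
    | zero => exact le_refl 2
    | succ j ih =>
      have h2 : es j < es (j + 1) := (hSeq j).2.1
      omega
  have hdiff : ∀ i j, i ≤ j → ts j - ts i ∈ M ^ (es i) := by
    intro i j hij
    induction j, hij using Nat.le_induction with
    | base => simpa using Ideal.zero_mem _
    | succ j hij ih =>
      have h1 : ts (j + 1) - ts j ∈ M ^ (es i) :=
        Ideal.pow_le_pow_right (hes_mono hij) (hSeq j).1
      have e : ts (j + 1) - ts i = (ts (j + 1) - ts j) + (ts j - ts i) := by ring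
      rw [e]; exact Ideal.add_mem _ h1 ih
  haveI : IsPrecomplete M T := IsAdicComplete.toIsPrecomplete
  have hsmul_top : ∀ k : ℕ, (M ^ k • ⊤ : Submodule T T) = M ^ k := by
    intro k
    rw [smul_eq_mul, Ideal.mul_top]
  obtain ⟨L, hL⟩ := IsPrecomplete.prec ‹IsPrecomplete M T›
    (f := ts) (by
      intro a b hab
      rw [SModEq.sub_mem, hsmul_top]
      have := hdiff a b hab
      have h2 : M ^ (es a) ≤ M ^ a := Ideal.pow_le_pow_right (by have := hes_ge a; omega)
      have h3 : ts b - ts a ∈ M ^ a := h2 this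
      simpa using (neg_mem h3))
  have hLdiff : ∀ n, L - ts n ∈ M ^ n := by
    intro n
    have := hL n
    rw [SModEq.sub_mem, hsmul_top] at this
    simpa using (neg_mem this)
  refine ⟨L, ?_, ?_⟩
  · have h1 := hLdiff 2
    have : L = (L - ts 2) + ts 2 := by ring
    rw [this]
    exact Ideal.add_mem _ h1 (hts2 2)
  · intro q hq f hf
    obtain ⟨j, hj⟩ := hE (⟨q, hq⟩, f)
    have hQj : Q j = q := by rw [show Q j = ((E j).1 : Ideal T) from rfl, hj]
    have hFj : F j = f := by rw [show F j = (E j).2 from rfl, hj]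
    intro hmem
    -- L - ts (j+1) ∈ M ^ (es (j+1))
    have h1 : L - ts (es (j + 1)) ∈ M ^ (es (j + 1)) := hLdiff _
    have h2 : ts (es (j + 1)) - ts (j + 1) ∈ M ^ (es (j + 1)) :=
      hdiff (j + 1) (es (j + 1)) (by have := hes_ge (j + 1); omega)
    have h3 : L - ts (j + 1) ∈ M ^ (es (j + 1)) := by
      have e : L - ts (j + 1) = (L - ts (es (j + 1))) + (ts (es (j + 1)) - ts (j + 1)) := by ring
      rw [e]; exact Ideal.add_mem _ h1 h2
    have hdvd : (u + L) - (u + ts (j + 1)) ∣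
        Polynomial.eval (u + L) (g j) - Polynomial.eval (u + ts (j + 1)) (g j) :=
      Polynomial.sub_dvd_eval_sub _ _ _
    have h4 : Polynomial.eval (u + L) (g j) - Polynomial.eval (u + ts (j + 1)) (g j) ∈
        M ^ (es (j + 1)) := by
      obtain ⟨k, hk⟩ := hdvd
      rw [hk]
      have e : (u + L) - (u + ts (j + 1)) = L - ts (j + 1) := by ring
      rw [e]
      exact Ideal.mul_mem_right _ _ h3
    have h5 : Polynomial.eval (u + L) (g j) ∈ q := by
      rw [Polynomial.eval₂_eq_eval_map] at hmem
      show Polynomial.eval (u + L) ((F j).map R.subtype) ∈ q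
      rw [hFj]
      exact hmem
    have h6 : Polynomial.eval (u + ts (j + 1)) (g j) ∈ Q j ⊔ M ^ (es (j + 1)) := by
      have e : Polynomial.eval (u + ts (j + 1)) (g j) =
          Polynomial.eval (u + L) (g j) -
          (Polynomial.eval (u + L) (g j) - Polynomial.eval (u + ts (j + 1)) (g j)) := by ring
      rw [e]
      apply Submodule.sub_mem
      · exact Submodule.mem_sup_left (hQj ▸ h5)
      · exact Submodule.mem_sup_right h4
    exact (hSeq j).2.2 (hFj ▸ hf) h6

end Case1

section Combine

variable {T : Type*} [CommRing T] [IsLocalRing T] [IsNoetherianRing T]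
  [IsAdicComplete (maximalIdeal T) T] (R : Subring T)

theorem exists_transcendental [Infinite ↥R]
    (hRcard : Cardinal.mk ↥R ≤ max Cardinal.aleph0 (Cardinal.mk (ResidueField T)) ∧
      (Cardinal.mk ↥R = max Cardinal.aleph0 (Cardinal.mk (ResidueField T)) →
        Cardinal.mk (ResidueField T) ≤ Cardinal.aleph0))
    (C : Set (Ideal T)) (hCfin : C.Finite) (hCne : C.Nonempty)
    (hC : ∀ q ∈ C, q.IsPrime ∧ q ≠ maximalIdeal T ∧ Ideal.comap R.subtype q = ⊥)
    (u : T) :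
    ∃ t ∈ maximalIdeal T ^ 2, ∀ q ∈ C, ∀ f : Polynomial ↥R, f ≠ 0 →
      Polynomial.eval₂ R.subtype (u + t) f ∉ q := by
  rcases le_or_gt (Cardinal.mk ↥R) Cardinal.aleph0 with hle | hlt
  · exact case1_all R (Cardinal.mk_le_aleph0_iff.mp hle) C hCfin hCne hC u
  · -- uncountable case: mk R < mk k
    have hcard : Cardinal.mk ↥R < Cardinal.mk (ResidueField T) := by
      have h1 : Cardinal.mk ↥R ≤ max Cardinal.aleph0 (Cardinal.mk (ResidueField T)) := hRcard.1
      have hk : Cardinal.aleph0 < Cardinal.mk (ResidueField T) := by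
        by_contra hc
        push_neg at hc
        have : Cardinal.mk ↥R ≤ Cardinal.aleph0 := le_trans h1 (max_le le_rfl hc)
        exact absurd this (not_le.mpr hlt)
      have hmax : max Cardinal.aleph0 (Cardinal.mk (ResidueField T)) =
          Cardinal.mk (ResidueField T) := max_eq_right (le_of_lt hk)
      rw [hmax] at h1
      rcases lt_or_eq_of_le h1 with h | h
      · exact h
      · have := hRcard.2 (by rw [hmax]; exact h)
        exact absurd (lt_of_lt_of_le hk this) (lt_irrefl _)
    haveI : Nonempty T := ⟨0⟩
    set L := hCfin.toFinset.toList with hLdef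
    have hmemL : ∀ q, q ∈ L ↔ q ∈ C := by
      intro q
      rw [hLdef, Finset.mem_toList, Set.Finite.mem_toFinset]
    obtain ⟨d, hd, hgood⟩ := case2_all R hcard L
      (fun q hq => hC q ((hmemL q).mp hq)) u 2 (by omega)
    refine ⟨d, hd, fun q hq f hf => ?_⟩
    have := hgood 0 (Ideal.zero_mem _) q ((hmemL q).mpr hq) f hf
    rwa [add_zero] at this

end Combine

section Construct

variable {T : Type*} [CommRing T] [IsLocalRing T] (R : Subring T) (x : T)

private def ev (f : Polynomial ↥R) : T := Polynomial.eval₂ R.subtype x f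

/-- The localization of `R[x]` at `R[x] ∩ m`, as a subring of `T`. -/
def fracSubring : Subring T where
  carrier := {a : T | ∃ f g : Polynomial ↥R,
    ev R x g ∉ maximalIdeal T ∧ a * ev R x g = ev R x f}
  one_mem' := ⟨1, 1, by
    constructor
    · show Polynomial.eval₂ R.subtype x 1 ∉ _
      rw [Polynomial.eval₂_one]
      exact fun h => (maximalIdeal.isMaximal T).ne_top (Ideal.eq_top_of_isUnit_mem _ h isUnit_one)
    · simp⟩
  zero_mem' := ⟨0, 1, by
    constructor
    · show Polynomial.eval₂ R.subtype x 1 ∉ _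
      rw [Polynomial.eval₂_one]
      exact fun h => (maximalIdeal.isMaximal T).ne_top (Ideal.eq_top_of_isUnit_mem _ h isUnit_one)
    · show (0 : T) * _ = Polynomial.eval₂ R.subtype x 0
      rw [Polynomial.eval₂_zero, zero_mul]⟩
  add_mem' := by
    rintro a b ⟨f1, g1, hg1, he1⟩ ⟨f2, g2, hg2, he2⟩
    refine ⟨f1 * g2 + f2 * g1, g1 * g2, ?_, ?_⟩
    · show Polynomial.eval₂ R.subtype x (g1 * g2) ∉ _
      rw [Polynomial.eval₂_mul]
      intro h
      rcases ((maximalIdeal.isMaximal T).isPrime.mem_or_mem h) with h | h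
      exacts [hg1 h, hg2 h]
    · show (a + b) * Polynomial.eval₂ R.subtype x (g1 * g2) =
        Polynomial.eval₂ R.subtype x (f1 * g2 + f2 * g1)
      rw [Polynomial.eval₂_add, Polynomial.eval₂_mul, Polynomial.eval₂_mul,
        Polynomial.eval₂_mul]
      unfold ev at he1 he2
      calc (a + b) * (Polynomial.eval₂ R.subtype x g1 * Polynomial.eval₂ R.subtype x g2)
          = (a * Polynomial.eval₂ R.subtype x g1) * Polynomial.eval₂ R.subtype x g2 +
            (b * Polynomial.eval₂ R.subtype x g2) * Polynomial.eval₂ R.subtype x g1 := by ring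
        _ = _ := by rw [he1, he2]
  mul_mem' := by
    rintro a b ⟨f1, g1, hg1, he1⟩ ⟨f2, g2, hg2, he2⟩
    refine ⟨f1 * f2, g1 * g2, ?_, ?_⟩
    · show Polynomial.eval₂ R.subtype x (g1 * g2) ∉ _
      rw [Polynomial.eval₂_mul]
      intro h
      rcases ((maximalIdeal.isMaximal T).isPrime.mem_or_mem h) with h | h
      exacts [hg1 h, hg2 h]
    · show (a * b) * Polynomial.eval₂ R.subtype x (g1 * g2) =
        Polynomial.eval₂ R.subtype x (f1 * f2)
      rw [Polynomial.eval₂_mul, Polynomial.eval₂_mul]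
      unfold ev at he1 he2
      calc (a * b) * (Polynomial.eval₂ R.subtype x g1 * Polynomial.eval₂ R.subtype x g2)
          = (a * Polynomial.eval₂ R.subtype x g1) * (b * Polynomial.eval₂ R.subtype x g2) := by
            ring
        _ = _ := by rw [he1, he2]
  neg_mem' := by
    rintro a ⟨f, g, hg, he⟩
    refine ⟨-f, g, hg, ?_⟩
    show (-a) * ev R x g = ev R x (-f)
    unfold ev at he ⊢
    rw [Polynomial.eval₂_neg, ← he]
    ring

theorem mem_fracSubring {a : T} : a ∈ fracSubring R x ↔ ∃ f g : Polynomial ↥R,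
    Polynomial.eval₂ R.subtype x g ∉ maximalIdeal T ∧
    a * Polynomial.eval₂ R.subtype x g = Polynomial.eval₂ R.subtype x f := Iff.rfl

theorem le_fracSubring : R ≤ fracSubring R x := by
  intro r hr
  refine (mem_fracSubring R x).mpr ⟨Polynomial.C ⟨r, hr⟩, 1, ?_, ?_⟩
  · rw [Polynomial.eval₂_one]
    exact fun h => (maximalIdeal.isMaximal T).ne_top (Ideal.eq_top_of_isUnit_mem _ h isUnit_one)
  · rw [Polynomial.eval₂_one, Polynomial.eval₂_C, mul_one]
    rfl

theorem x_mem_fracSubring : x ∈ fracSubring R x := by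
  refine (mem_fracSubring R x).mpr ⟨Polynomial.X, 1, ?_, ?_⟩
  · rw [Polynomial.eval₂_one]
    exact fun h => (maximalIdeal.isMaximal T).ne_top (Ideal.eq_top_of_isUnit_mem _ h isUnit_one)
  · rw [Polynomial.eval₂_one, Polynomial.eval₂_X, mul_one]

/-- Elements of `S` outside `m` have their inverse in `S`. -/
theorem inv_mem_fracSubring {a : T} (ha : a ∈ fracSubring R x) (ham : a ∉ maximalIdeal T) :
    ∃ b ∈ fracSubring R x, a * b = 1 := by
  obtain ⟨f, g, hg, he⟩ := (mem_fracSubring R x).mp ha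
  have haunit : IsUnit a := by
    by_contra h
    exact ham ((IsLocalRing.mem_maximalIdeal a).mpr h)
  obtain ⟨b, hb⟩ := haunit.exists_right_inv
  have hfm : Polynomial.eval₂ R.subtype x f ∉ maximalIdeal T := by
    rw [← he]
    intro h
    rcases ((maximalIdeal.isMaximal T).isPrime.mem_or_mem h) with h | h
    exacts [ham h, hg h]
  refine ⟨b, (mem_fracSubring R x).mpr ⟨g, f, hfm, ?_⟩, hb⟩
  rw [← he]
  calc b * (a * Polynomial.eval₂ R.subtype x g) =
      (a * b) * Polynomial.eval₂ R.subtype x g := by ring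
    _ = _ := by rw [hb, one_mul]

end Construct

section Construct2

variable {T : Type*} [CommRing T] [IsLocalRing T] (R : Subring T) (x : T)

theorem not_one_mem_maximalIdeal : (1 : T) ∉ maximalIdeal T :=
  fun h => (maximalIdeal.isMaximal T).ne_top (Ideal.eq_top_of_isUnit_mem _ h isUnit_one)

theorem fracSubring_isLocalRing : IsLocalRing ↥(fracSubring R x) := by
  haveI : Nontrivial ↥(fracSubring R x) :=
    ⟨⟨0, Subring.zero_mem _⟩, ⟨1, Subring.one_mem _⟩, by
      intro h
      exact zero_ne_one (congrArg Subtype.val h)⟩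
  apply IsLocalRing.of_isUnit_or_isUnit_one_sub_self
  intro a
  by_cases ham : (a : T) ∈ maximalIdeal T
  · right
    have h1m : ((1 - a : ↥(fracSubring R x)) : T) ∉ maximalIdeal T := by
      intro h
      apply not_one_mem_maximalIdeal (T := T)
      have : (1 : T) = ((1 - a : ↥(fracSubring R x)) : T) + (a : T) := by
        push_cast
        ring
      rw [this]
      exact Ideal.add_mem _ h ham
    obtain ⟨b, hbS, hb⟩ := inv_mem_fracSubring R x (1 - a).2 h1m
    rw [isUnit_iff_exists_inv]
    exact ⟨⟨b, hbS⟩, Subtype.ext (by push_cast; exact hb)⟩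
  · left
    obtain ⟨b, hbS, hb⟩ := inv_mem_fracSubring R x a.2 ham
    rw [isUnit_iff_exists_inv]
    exact ⟨⟨b, hbS⟩, Subtype.ext (by push_cast; exact hb)⟩

theorem fracSubring_comap_maximal :
    (Ideal.comap (fracSubring R x).subtype (maximalIdeal T)).IsMaximal := by
  rw [Ideal.isMaximal_iff]
  constructor
  · intro h
    exact not_one_mem_maximalIdeal (T := T) h
  · intro J s hIJ hsI hsJ
    have hsm : (s : T) ∉ maximalIdeal T := hsI
    obtain ⟨b, hbS, hb⟩ := inv_mem_fracSubring R x s.2 hsm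
    have : s * ⟨b, hbS⟩ ∈ J := J.mul_mem_right _ hsJ
    have he : s * (⟨b, hbS⟩ : ↥(fracSubring R x)) = 1 := Subtype.ext hb
    rwa [he] at this

theorem fracSubring_comap_bot {q : Ideal T}
    (hgood : ∀ f : Polynomial ↥R, f ≠ 0 → Polynomial.eval₂ R.subtype x f ∉ q) :
    Ideal.comap (fracSubring R x).subtype q = ⊥ := by
  rw [eq_bot_iff]
  intro a ha
  have haq : (a : T) ∈ q := ha
  obtain ⟨f, g, hg, he⟩ := (mem_fracSubring R x).mp a.2
  by_cases hf : f = 0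
  · subst hf
    rw [Polynomial.eval₂_zero] at he
    have hunit : IsUnit (Polynomial.eval₂ R.subtype x g) := by
      by_contra h
      exact hg ((IsLocalRing.mem_maximalIdeal _).mpr h)
    have : (a : T) = 0 := by
      obtain ⟨e', he'⟩ := hunit.exists_right_inv
      calc (a : T) = (a : T) * (Polynomial.eval₂ R.subtype x g * e') := by rw [he', mul_one]
        _ = ((a : T) * Polynomial.eval₂ R.subtype x g) * e' := by ring
        _ = 0 := by rw [he, zero_mul]
    rw [Submodule.mem_bot]
    exact Subtype.ext this
  · exfalso
    apply hgood f hf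
    rw [← he]
    exact q.mul_mem_right _ haq

theorem fracSubring_card [Infinite ↥R] :
    Cardinal.mk ↥(fracSubring R x) = Cardinal.mk ↥R := by
  apply le_antisymm
  · have hw : ∀ a : ↥(fracSubring R x), ∃ fg : Polynomial ↥R × Polynomial ↥R,
        Polynomial.eval₂ R.subtype x fg.2 ∉ maximalIdeal T ∧
        (a : T) * Polynomial.eval₂ R.subtype x fg.2 = Polynomial.eval₂ R.subtype x fg.1 := by
      intro a
      obtain ⟨f, g, hg, he⟩ := (mem_fracSubring R x).mp a.2
      exact ⟨(f, g), hg, he⟩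
    choose W hW1 hW2 using hw
    have hWinj : Function.Injective W := by
      intro a b hab
      have h1 := hW2 a
      have h2 := hW2 b
      rw [hab] at h1
      rw [← h2] at h1
      have hunit : IsUnit (Polynomial.eval₂ R.subtype x (W b).2) := by
        by_contra h
        exact hW1 b ((IsLocalRing.mem_maximalIdeal _).mpr h)
      obtain ⟨e', he'⟩ := hunit.exists_right_inv
      apply Subtype.ext
      calc (a : T) = (a : T) * (Polynomial.eval₂ R.subtype x (W b).2 * e') := by
            rw [he', mul_one]
        _ = ((a : T) * Polynomial.eval₂ R.subtype x (W b).2) * e' := by ring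
        _ = ((b : T) * Polynomial.eval₂ R.subtype x (W b).2) * e' := by rw [h1]
        _ = (b : T) * (Polynomial.eval₂ R.subtype x (W b).2 * e') := by ring
        _ = (b : T) := by rw [he', mul_one]
    calc Cardinal.mk ↥(fracSubring R x)
        ≤ Cardinal.mk (Polynomial ↥R × Polynomial ↥R) := Cardinal.mk_le_of_injective hWinj
      _ = Cardinal.mk (Polynomial ↥R) * Cardinal.mk (Polynomial ↥R) := by
          rw [Cardinal.mk_prod]
          simp
      _ = Cardinal.mk ↥R * Cardinal.mk ↥R := by
          rw [Polynomial.cardinalMk_eq_max, max_eq_left (Cardinal.aleph0_le_mk ↥R)]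
      _ = Cardinal.mk ↥R := Cardinal.mul_eq_self (Cardinal.aleph0_le_mk ↥R)
  · apply Cardinal.mk_le_of_injective (f := fun r : ↥R =>
      (⟨(r : T), le_fracSubring R x r.2⟩ : ↥(fracSubring R x)))
    intro r s hrs
    have : (r : T) = (s : T) := congrArg (fun y : ↥(fracSubring R x) => (y : T)) hrs
    exact Subtype.ext this

end Construct2

end AuxDevelopment

/-- Enlarging a `p`-subring to hit a prescribed coset of `m²`. -/
theorem pSubring_adjoin_coset
    (T : Type*) [CommRing T] [IsLocalRing T] [IsNoetherianRing T]
    [IsAdicComplete (maximalIdeal T) T]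
    (hm : maximalIdeal T ∉ associatedPrimes T T)
    (P : Ideal T) (hP : P.IsPrime) (hPm : P ≠ maximalIdeal T)
    (R : Subring T) (hR : IsPSubring T P R) (hRinf : Infinite R) (u : T) :
    ∃ S : Subring T, IsPSubring T P S ∧ R ≤ S ∧
      (∃ a ∈ S, a - u ∈ maximalIdeal T ^ 2) ∧
      Cardinal.mk S = Cardinal.mk R := by
  classical
  haveI := hRinf
  obtain ⟨hRloc, hRmax, hRcard, hRP, hRAss⟩ := hR
  set C : Set (Ideal T) := insert P (associatedPrimes T T) with hCdef
  have hCfin : C.Finite := (associatedPrimes_finite T T).insert P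
  have hCne : C.Nonempty := ⟨P, Set.mem_insert _ _⟩
  have hC : ∀ q ∈ C, q.IsPrime ∧ q ≠ maximalIdeal T ∧ Ideal.comap R.subtype q = ⊥ := by
    intro q hq
    rcases Set.mem_insert_iff.mp hq with rfl | hq'
    · exact ⟨hP, hPm, hRP⟩
    · exact ⟨(AssociatedPrimes.mem_iff.mp hq').isPrime, fun h => hm (h ▸ hq'), hRAss q hq'⟩
  obtain ⟨t, ht, hgood⟩ := exists_transcendental R hRcard C hCfin hCne hC u
  set x : T := u + t with hxdef
  refine ⟨fracSubring R x, ⟨fracSubring_isLocalRing R x, fracSubring_comap_maximal R x, ?_,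
    fracSubring_comap_bot R x (hgood P (Set.mem_insert _ _)), fun Q hQ =>
      fracSubring_comap_bot R x (hgood Q (Set.mem_insert_of_mem _ hQ))⟩,
    le_fracSubring R x, ⟨x, x_mem_fracSubring R x, by
      rw [hxdef]
      simpa using ht⟩, fracSubring_card R x⟩
  rw [fracSubring_card R x]
  exact hRcard
end

section
/- Let (T,m) be a complete local equicharacteristic ring with depth T ≥ 1, and let p be a nonmaximal prime ideal of T. Let y be a regular element of T with y ∈ m \ p. Then there exists a countably infinite N-subring (R, R∩m) of T such that R ∩ p = (0) and yt ∈ R for some unit t of T. -/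
open IsLocalRing

section AuxNSubring

open Polynomial

private lemma isUnit_add_of_mem_max {T : Type*} [CommRing T] [IsLocalRing T] {a u : T}
    (ha : a ∈ maximalIdeal T) (hu : IsUnit u) : IsUnit (a + u) := by
  by_contra h
  have h1 : a + u ∈ maximalIdeal T := by rwa [mem_maximalIdeal, mem_nonunits_iff]
  have h2 : u ∈ maximalIdeal T := by simpa using Ideal.sub_mem _ h1 ha
  rw [mem_maximalIdeal, mem_nonunits_iff] at h2
  exact h2 hu

private lemma poly_factor {K : Type*} [Field K] (f : K[X]) (hf : f ≠ 0) :
    ∃ (k : ℕ) (g : K[X]), f = X ^ k * g ∧ g.coeff 0 ≠ 0 := by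
  have hdvd : X ^ f.natTrailingDegree ∣ f := by
    rw [Polynomial.X_pow_dvd_iff]
    intro d hd
    exact Polynomial.coeff_eq_zero_of_lt_natTrailingDegree hd
  set k := f.natTrailingDegree with hk
  obtain ⟨g, hg⟩ := hdvd
  have h0 : f.coeff k ≠ 0 := by
    have := mt Polynomial.trailingCoeff_eq_zero.mp hf
    rwa [Polynomial.trailingCoeff] at this
  refine ⟨k, g, hg, ?_⟩
  have hc : f.coeff k = g.coeff 0 := by
    rw [hg]
    have := Polynomial.coeff_X_pow_mul g k 0
    rwa [zero_add] at this
  rw [← hc]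
  exact h0

set_option maxHeartbeats 1000000 in
private theorem auxNSubring (T : Type*) [CommRing T] [IsLocalRing T]
    (K : Type) [Field K] [Countable K] (φ : K →+* T)
    (P : Ideal T) (hP : P.IsPrime)
    (y : T) (hyreg : y ∈ nonZeroDivisors T) (hym : y ∈ maximalIdeal T) (hyP : y ∉ P) :
    ∃ R : Subring T, IsNSubring T R ∧ Countable R ∧ Infinite R ∧
      Ideal.comap R.subtype P = ⊥ ∧ ∃ t : Tˣ, y * (t : T) ∈ R := by
  classical
  set ε : K[X] →+* T := eval₂RingHom φ y with hεdef
  have hεX : ε X = y := eval₂_X φ y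
  have hεunit : ∀ g : K[X], g.coeff 0 ≠ 0 → IsUnit (ε g) := by
    intro g hg
    have h1 : ε g = y * ε g.divX + φ (g.coeff 0) := by
      conv_lhs => rw [← X_mul_divX_add g]
      rw [map_add, map_mul, hεX]
      congr 1
      simp [hεdef]
    rw [h1]
    exact isUnit_add_of_mem_max (Ideal.mul_mem_right _ _ hym)
      ((isUnit_iff_ne_zero.mpr hg).map φ)
  set I : Ideal K[X] := Ideal.span {X} with hIdef
  haveI hIprime : I.IsPrime := (Ideal.span_singleton_prime X_ne_zero).mpr prime_X
  set S : Submonoid K[X] := I.primeCompl with hSdef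
  have hmemS : ∀ g : K[X], g ∈ S ↔ g.coeff 0 ≠ 0 := by
    intro g
    have h1 : g ∈ S ↔ g ∉ I := Iff.rfl
    rw [h1, hIdef, Ideal.mem_span_singleton, X_dvd_iff]
  have hSunits : ∀ s : S, IsUnit (ε s) := fun s => hεunit s ((hmemS s).mp s.2)
  set ψ : Localization S →+* T := IsLocalization.lift hSunits with hψdef
  have hψalg : ∀ f : K[X], ψ (algebraMap K[X] (Localization S) f) = ε f :=
    fun f => IsLocalization.lift_eq hSunits f
  have hkey : ∀ s : Localization S, s ≠ 0 → ∃ (k : ℕ) (v : Localization S),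
      IsUnit v ∧ s = algebraMap K[X] (Localization S) X ^ k * v := by
    intro s hs
    obtain ⟨⟨f, g⟩, hfg⟩ := IsLocalization.mk'_surjective S s
    obtain rfl : IsLocalization.mk' (Localization S) f g = s := hfg
    have hf : f ≠ 0 := by
      rintro rfl
      exact hs (IsLocalization.mk'_zero g)
    obtain ⟨k, h, rfl, hh⟩ := poly_factor f hf
    have hhS : h ∈ S := (hmemS h).mpr hh
    refine ⟨k, IsLocalization.mk' _ h g, ?_, ?_⟩
    · refine IsUnit.of_mul_eq_one (IsLocalization.mk' _ (g : K[X]) ⟨h, hhS⟩) ?_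
      rw [← IsLocalization.mk'_mul, mul_comm h (g : K[X])]
      exact IsLocalization.mk'_self'' (S := Localization S) (x := g * ⟨h, hhS⟩)
    · rw [← map_pow, IsLocalization.mul_mk'_eq_mk'_of_mul]
  have hψfact : ∀ s : Localization S, s ≠ 0 → ∃ (k : ℕ) (u : T), IsUnit u ∧ ψ s = y ^ k * u := by
    intro s hs
    obtain ⟨k, v, hv, rfl⟩ := hkey s hs
    exact ⟨k, ψ v, hv.map ψ, by rw [map_mul, map_pow, hψalg, hεX]⟩
  have hynz : ∀ k : ℕ, y ^ k ≠ 0 := by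
    intro k hk
    have h1 : (1 : T) = 0 := (mem_nonZeroDivisors_iff_right.mp (pow_mem hyreg k)) 1 (by rw [one_mul, hk])
    exact one_ne_zero h1
  have hψinj : Function.Injective ψ := by
    rw [injective_iff_map_eq_zero]
    intro s hs0
    by_contra hs
    obtain ⟨k, u, hu, hE⟩ := hψfact s hs
    rw [hs0] at hE
    exact hynz k ((hu.mul_left_eq_zero).mp hE.symm)
  set R : Subring T := ψ.range with hRdef
  have hyR : y ∈ R := ⟨algebraMap K[X] _ X, by rw [hψalg, hεX]⟩
  set e : Localization S ≃+* R := RingEquiv.ofBijective ψ.rangeRestrict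
    ⟨fun a b hab => hψinj (congrArg Subtype.val hab), ψ.rangeRestrict_surjective⟩ with hedef
  have hecoe : ∀ s, ((e s : R) : T) = ψ s := fun s => rfl
  haveI hSloc : IsLocalization.AtPrime (Localization S) I := Localization.isLocalization
  haveI hLloc : IsLocalRing (Localization S) := IsLocalization.AtPrime.isLocalRing (Localization S) I
  haveI hLdom : IsDomain (Localization S) := by
    refine IsLocalization.isDomain_localization ?_
    intro x hx
    refine mem_nonZeroDivisors_of_ne_zero ?_
    rintro rfl
    exact hx I.zero_mem
  haveI hLdvr : IsDiscreteValuationRing (Localization S) :=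
    IsLocalization.AtPrime.isDiscreteValuationRing_of_dedekind_domain K[X]
      (fun hb => X_ne_zero (Ideal.span_singleton_eq_bot.mp hb)) (Localization S)
  haveI hLufd : UniqueFactorizationMonoid (Localization S) := inferInstance
  haveI hRdom : IsDomain R := Function.Injective.isDomain (e.symm : R →+* Localization S) e.symm.injective
  haveI hRlocal : IsLocalRing R := e.isLocalRing
  haveI hRufd : UniqueFactorizationMonoid R := e.toMulEquiv.uniqueFactorizationMonoid hLufd
  haveI hFinCnt : Countable (AddMonoidAlgebra K ℕ) := Countable.of_equiv _ AddMonoidAlgebra.coeffEquiv.symm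
  haveI hPolyCnt : Countable K[X] :=
    Function.Injective.countable (f := fun f : K[X] => f.toFinsupp)
      (fun a b hab => Polynomial.toFinsupp_injective hab)
  have hsurj : Function.Surjective (fun p : K[X] × S => IsLocalization.mk' (Localization S) p.1 p.2) := by
    intro z
    obtain ⟨⟨x, s⟩, h⟩ := IsLocalization.mk'_surjective S z
    exact ⟨(x, s), h⟩
  haveI hLcnt : Countable (Localization S) := hsurj.countable
  haveI hRcnt : Countable R := Countable.of_equiv _ e.toEquiv
  have hpowinj : Function.Injective (fun n : ℕ => (⟨y ^ n, pow_mem hyR n⟩ : R)) := by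
    have key : ∀ a b : ℕ, a < b → y ^ a ≠ y ^ b := by
      intro a b hab heq
      have h1 : y ^ a * 1 = y ^ a * y ^ (b - a) := by
        rw [mul_one, ← pow_add]
        have hba : a + (b - a) = b := by omega
        rw [hba, heq]
      have h2 : (1 : T) = y ^ (b - a) :=
        (mul_cancel_left_mem_nonZeroDivisors (pow_mem hyreg a)).mp h1
      have h3 : IsUnit y := by
        refine IsUnit.of_mul_eq_one (a := y) (y ^ (b - a - 1)) ?_
        rw [← pow_succ']
        have : b - a - 1 + 1 = b - a := by omega
        rw [this, ← h2]
      rw [mem_maximalIdeal, mem_nonunits_iff] at hym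
      exact hym h3
    intro a b hab
    have h : y ^ a = y ^ b := congrArg Subtype.val hab
    rcases lt_trichotomy a b with h' | h' | h'
    · exact absurd h (key a b h')
    · exact h'
    · exact absurd h.symm (key b a h')
  haveI hRinf : Infinite R := Infinite.of_injective _ hpowinj
  have hcomap : ∀ J : Ideal T, J.IsPrime → y ∉ J → Ideal.comap R.subtype J = ⊥ := by
    intro J hJ hyJ
    ext r
    simp only [Ideal.mem_comap, Ideal.mem_bot]
    constructor
    · intro hr
      by_contra hr0
      obtain ⟨s, rfl⟩ := e.surjective r
      have hs0 : s ≠ 0 := by rintro rfl; exact hr0 (by rw [map_zero])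
      obtain ⟨k, u, hu, hE⟩ := hψfact s hs0
      have hmemJ : y ^ k * u ∈ J := by rw [← hE]; exact hr
      have hyk : y ^ k ∈ J := (hJ.mem_or_mem hmemJ).resolve_right
        (fun hu' => hJ.ne_top (J.eq_top_of_isUnit_mem hu' hu))
      exact hyJ (hJ.mem_of_pow_mem k hyk)
    · intro hr0
      have : r = 0 := hr0
      rw [this]
      simp
  set yR : R := (⟨y, hyR⟩ : R) with hyRdef
  have hfactR : ∀ x : R, x ≠ 0 → ∃ (k : ℕ) (u : R), IsUnit u ∧ x = yR ^ k * u := by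
    intro x hx
    obtain ⟨s, rfl⟩ := e.surjective x
    have hs : s ≠ 0 := fun h => hx (by rw [h, map_zero])
    obtain ⟨k, v, hv, hsv⟩ := hkey s hs
    refine ⟨k, e v, hv.map (e : Localization S →+* R), ?_⟩
    rw [hsv, map_mul, map_pow]
    have : e (algebraMap K[X] (Localization S) X) = yR := by
      apply Subtype.ext
      rw [hecoe, hψalg, hεX, hyRdef]
    rw [this]
  have hunitR : ∀ x : R, IsUnit (x : T) → IsUnit x := by
    intro x hx
    have hx0 : x ≠ 0 := by
      rintro rfl
      exact hx.ne_zero rfl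
    obtain ⟨k, u, hu, rfl⟩ := hfactR x hx0
    rcases Nat.eq_zero_or_pos k with hk | hk
    · rw [hk, pow_zero, one_mul]
      exact hu
    · exfalso
      have hmem : ((yR ^ k * u : R) : T) ∈ maximalIdeal T := by
        push_cast
        exact Ideal.mul_mem_right _ _ (Ideal.pow_mem_of_mem _ hym k hk)
      rw [mem_maximalIdeal, mem_nonunits_iff] at hmem
      exact hmem hx
  have hmaxcomap : Ideal.comap R.subtype (maximalIdeal T) = maximalIdeal R := by
    ext x
    rw [Ideal.mem_comap, mem_maximalIdeal, mem_maximalIdeal, mem_nonunits_iff, mem_nonunits_iff]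
    constructor
    · intro h hxu
      exact h (hxu.map R.subtype)
    · intro h hxu
      exact h (hunitR x hxu)
  have hprimeR : ∀ q : Ideal R, q.IsPrime → q ≠ ⊥ → q = maximalIdeal R := by
    intro q hq hq0
    have hyq : yR ∈ q := by
      obtain ⟨x, hxq, hx0⟩ := Submodule.exists_mem_ne_zero_of_ne_bot hq0
      obtain ⟨k, u, hu, rfl⟩ := hfactR x hx0
      have hky : yR ^ k ∈ q := by
        obtain ⟨uu, rfl⟩ := hu
        have h2 := q.mul_mem_right (↑uu⁻¹) hxq
        rwa [mul_assoc, Units.mul_inv, mul_one] at h2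
      exact hq.mem_of_pow_mem k hky
    refine le_antisymm (le_maximalIdeal hq.ne_top) ?_
    intro z hz
    rcases eq_or_ne z 0 with rfl | hz0
    · exact q.zero_mem
    obtain ⟨k, u, hu, rfl⟩ := hfactR z hz0
    have hk0 : k ≠ 0 := by
      rintro rfl
      rw [pow_zero, one_mul] at hz
      rw [mem_maximalIdeal, mem_nonunits_iff] at hz
      exact hz hu
    obtain ⟨k', rfl⟩ : ∃ k', k = k' + 1 := ⟨k - 1, by omega⟩
    rw [pow_succ, mul_assoc]
    exact q.mul_mem_left _ (q.mul_mem_right _ hyq)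
  refine ⟨R, ⟨hRlocal, ?_, ⟨hRdom, hRufd⟩, ⟨?_, ?_⟩, ?_, ?_⟩, hRcnt, hRinf,
    hcomap P hP hyP, ⟨1, by simpa using hyR⟩⟩
  · rw [hmaxcomap]
    exact maximalIdeal.isMaximal R
  · exact le_trans Cardinal.mk_le_aleph0 (le_max_left _ _)
  · intro h
    have h2 := Cardinal.mk_le_aleph0 (α := R)
    rw [h] at h2
    exact (le_max_right _ _).trans h2
  · intro Q hQ
    obtain ⟨hQp, x, hx⟩ := hQ
    refine hcomap Q hQp ?_
    intro hyQ
    rw [hx] at hyQ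
    obtain ⟨n, hn⟩ := hyQ
    rw [Submodule.mem_colon_singleton, Submodule.mem_bot, smul_eq_mul] at hn
    have hx0 : x ≠ 0 := by
      rintro rfl
      apply hQp.ne_top
      rw [Ideal.eq_top_iff_one, hx]
      exact Ideal.le_radical (by simp [Submodule.mem_colon_singleton])
    exact hx0 ((mul_left_mem_nonZeroDivisors_eq_zero_iff (pow_mem hyreg n)).mp hn)
  · intro t ht J hJass q0 q1 hq0 hq1
    rintro ⟨h01, h1J⟩
    have hJp : J.IsPrime := hJass.isPrime
    have hJtop : Ideal.comap R.subtype J ≠ ⊤ := by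
      intro htop
      rw [Ideal.eq_top_iff_one] at htop
      apply hJp.ne_top
      rw [Ideal.eq_top_iff_one]
      simpa using htop
    have hq1max : q1 = maximalIdeal R := by
      refine hprimeR q1 hq1 ?_
      rintro rfl
      exact not_lt_bot h01
    have hlt : q1 < maximalIdeal R := lt_of_lt_of_le h1J (le_maximalIdeal hJtop)
    rw [hq1max] at hlt
    exact lt_irrefl _ hlt

end AuxNSubring

/-- In an equicharacteristic complete local ring of depth at least one,
there is a countably infinite N-subring avoiding a given nonmaximal prime and containing an
associate of a given regular element `y ∈ m \ p`. -/
theorem exists_countable_NSubring_with_associate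
    (T : Type*) [CommRing T] [IsLocalRing T] [IsNoetherianRing T]
    [IsAdicComplete (maximalIdeal T) T]
    (hequi : ∃ F : Subring T, IsField F)
    (hdepth : DepthGE T 1)
    (P : Ideal T) (hP : P.IsPrime) (hPm : P ≠ maximalIdeal T)
    (y : T) (hyreg : y ∈ nonZeroDivisors T) (hym : y ∈ maximalIdeal T) (hyP : y ∉ P) :
    ∃ R : Subring T, IsNSubring T R ∧ Countable R ∧ Infinite R ∧
      Ideal.comap R.subtype P = ⊥ ∧ ∃ t : Tˣ, y * (t : T) ∈ R := by
  obtain ⟨F, hF⟩ := hequi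
  letI : Field F := hF.toField
  rcases CharP.char_is_prime_or_zero F (ringChar F) (hc := ringChar.charP F) with hp | hp
  · haveI : Fact (ringChar F).Prime := ⟨hp⟩
    haveI : NeZero (ringChar F) := ⟨hp.pos.ne'⟩
    haveI : CharP F (ringChar F) := ringChar.charP F
    exact auxNSubring T (ZMod (ringChar F)) (F.subtype.comp (ZMod.castHom dvd_rfl F))
      P hP y hyreg hym hyP
  · haveI : CharP F 0 := hp ▸ ringChar.charP F
    haveI : CharZero F := CharP.charP_to_charZero F
    exact auxNSubring T ℚ (F.subtype.comp (Rat.castHom F)) P hP y hyreg hym hyP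
end
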